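/- arXiv:1402.1096 — 2 statements merged into one kernel-verified Lean document; each statement's English description precedes it below -/
import Mathlib

section
/- Let X be an infinitely divisible random variable with characteristic function exp(iθσ² + ∫₀^{τ²}(e^{iθx} − 1) Π_s(dx)), where Π_s is a finite-moment Lévy measure supported on (0, τ²]. Let Xₙ be uniformly bounded random variables (0 ≤ Xₙ ≤ τ²) with characteristic functions φₙ such that n(φₙ(θ) − 1) → iθσ² + ∫₀^{τ²}(e^{iθx} − 1)Π_s(dx) uniformly on compact sets. Then for each k ≥ 1, n·E[Xₙ^k] converges: to σ² + ∫ x Π_s(dx) when k = 1, and to ∫ x^k Π_s(dx) when k ≥ 2. -/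
open MeasureTheory Filter

noncomputable section CFEM

namespace CFEM

/-- forward difference operator -/
def dd (h : ℝ) (f : ℝ → ℂ) : ℝ → ℂ := fun θ => f (θ + h) - f θ

lemma dd_apply (h : ℝ) (f : ℝ → ℂ) (θ : ℝ) : dd h f θ = f (θ + h) - f θ := rfl

lemma iter_dd_tendsto (h : ℝ) (F : ℕ → ℝ → ℂ) (G : ℝ → ℂ)
    (hF : ∀ θ, Tendsto (fun n => F n θ) atTop (nhds (G θ))) :
    ∀ (m : ℕ) (θ : ℝ), Tendsto (fun n => (dd h)^[m] (F n) θ) atTop (nhds ((dd h)^[m] G θ)) := by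
  intro m
  induction m with
  | zero => simpa using hF
  | succ m ih =>
    intro θ
    simp only [Function.iterate_succ_apply', dd_apply]
    exact (ih (θ + h)).sub (ih θ)

lemma iter_dd_const_mul (h : ℝ) (c : ℂ) (f : ℝ → ℂ) :
    ∀ m, (dd h)^[m] (fun θ => c * f θ) = fun θ => c * (dd h)^[m] f θ := by
  intro m
  induction m with
  | zero => rfl
  | succ m ih =>
    simp only [Function.iterate_succ_apply', ih]
    funext θ; simp only [dd_apply]; ring

lemma dd_const_mul_add (h : ℝ) (c d : ℂ) (f : ℝ → ℂ) :
    dd h (fun θ => c * f θ + d) = fun θ => c * dd h f θ := by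
  funext θ; simp only [dd_apply]; ring

lemma iter_dd_const_mul_add (h : ℝ) (c d : ℂ) (f : ℝ → ℂ) (m : ℕ) (hm : 1 ≤ m) :
    (dd h)^[m] (fun θ => c * f θ + d) = fun θ => c * (dd h)^[m] f θ := by
  obtain ⟨m, rfl⟩ := Nat.exists_eq_add_of_le hm
  rw [add_comm]
  rw [Function.iterate_succ_apply, Function.iterate_succ_apply, dd_const_mul_add,
    iter_dd_const_mul]


lemma norm_exp_mul_I (t : ℝ) : ‖Complex.exp ((t : ℂ) * Complex.I)‖ = 1 := by
  rw [Complex.norm_exp]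
  simp

lemma norm_exp3 (θ x : ℝ) : ‖Complex.exp ((θ : ℂ) * Complex.I * (x : ℂ))‖ = 1 := by
  have : (θ : ℂ) * Complex.I * (x : ℂ) = ((θ * x : ℝ) : ℂ) * Complex.I := by
    push_cast; ring
  rw [this, norm_exp_mul_I]

variable {α : Type*} [MeasurableSpace α]

lemma integrable_exp_mul {μ : Measure α} (θ h : ℝ) (m : ℕ) (v : α → ℝ) (hv : Measurable v)
    (g : α → ℂ) (hg : Integrable g μ) :
    Integrable (fun a => Complex.exp ((θ : ℂ) * Complex.I * (v a : ℂ)) *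
      (Complex.exp ((h : ℂ) * Complex.I * (v a : ℂ)) - 1) ^ m * g a) μ := by
  have hm1 : Measurable fun a => Complex.exp ((θ : ℂ) * Complex.I * (v a : ℂ)) :=
    Complex.measurable_exp.comp ((measurable_const.mul (Complex.measurable_ofReal.comp hv)))
  have hm2 : Measurable fun a => (Complex.exp ((h : ℂ) * Complex.I * (v a : ℂ)) - 1) ^ m :=
    ((Complex.measurable_exp.comp ((measurable_const.mul
      (Complex.measurable_ofReal.comp hv)))).sub measurable_const).pow_const m
  refine Integrable.mono' (hg.norm.const_mul (2 ^ m)) ?_ ?_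
  · exact ((hm1.mul hm2).aestronglyMeasurable.mul hg.aestronglyMeasurable)
  · refine Filter.Eventually.of_forall fun a => ?_
    rw [norm_mul, norm_mul, norm_exp3, one_mul, norm_pow]
    have h2 : ‖Complex.exp ((h : ℂ) * Complex.I * (v a : ℂ)) - 1‖ ≤ 2 := by
      calc ‖Complex.exp ((h : ℂ) * Complex.I * (v a : ℂ)) - 1‖
          ≤ ‖Complex.exp ((h : ℂ) * Complex.I * (v a : ℂ))‖ + ‖(1 : ℂ)‖ := norm_sub_le _ _
        _ = 2 := by rw [norm_exp3]; norm_num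
    have := pow_le_pow_left₀ (norm_nonneg _) h2 m
    calc ‖Complex.exp ((h : ℂ) * Complex.I * (v a : ℂ)) - 1‖ ^ m * ‖g a‖
        ≤ 2 ^ m * ‖g a‖ := by
          exact mul_le_mul_of_nonneg_right this (norm_nonneg _)

lemma iter_dd_integral {μ : Measure α} (h : ℝ) (v : α → ℝ) (hv : Measurable v)
    (g : α → ℂ) (hg : Integrable g μ) :
    ∀ (m : ℕ) (θ : ℝ),
      (dd h)^[m] (fun θ => ∫ a, Complex.exp ((θ : ℂ) * Complex.I * (v a : ℂ)) * g a ∂μ) θ =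
      ∫ a, Complex.exp ((θ : ℂ) * Complex.I * (v a : ℂ)) *
        (Complex.exp ((h : ℂ) * Complex.I * (v a : ℂ)) - 1) ^ m * g a ∂μ := by
  intro m
  induction m with
  | zero =>
    intro θ; simp
  | succ m ih =>
    intro θ
    rw [Function.iterate_succ_apply', dd_apply, ih, ih,
      ← integral_sub (integrable_exp_mul _ h m v hv g hg) (integrable_exp_mul _ h m v hv g hg)]
    congr 1
    funext a
    have hexp : Complex.exp (((θ + h : ℝ) : ℂ) * Complex.I * (v a : ℂ)) =
        Complex.exp ((θ : ℂ) * Complex.I * (v a : ℂ)) *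
        Complex.exp ((h : ℂ) * Complex.I * (v a : ℂ)) := by
      rw [← Complex.exp_add]; congr 1; push_cast; ring
    rw [hexp]; ring



lemma norm_pow_sub_pow' (a b : ℂ) (M : ℝ) (ha : ‖a‖ ≤ M) (hb : ‖b‖ ≤ M) :
    ∀ k : ℕ, ‖a ^ k - b ^ k‖ ≤ k * M ^ (k - 1) * ‖a - b‖ := by
  have hM : 0 ≤ M := le_trans (norm_nonneg a) ha
  intro k
  induction k with
  | zero => simp
  | succ k ih =>
    have key : a ^ (k + 1) - b ^ (k + 1) = a ^ k * (a - b) + (a ^ k - b ^ k) * b := by ring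
    rw [key]
    calc ‖a ^ k * (a - b) + (a ^ k - b ^ k) * b‖
        ≤ ‖a ^ k * (a - b)‖ + ‖(a ^ k - b ^ k) * b‖ := norm_add_le _ _
      _ = ‖a‖ ^ k * ‖a - b‖ + ‖a ^ k - b ^ k‖ * ‖b‖ := by rw [norm_mul, norm_mul, norm_pow]
      _ ≤ M ^ k * ‖a - b‖ + (k * M ^ (k - 1) * ‖a - b‖) * M := by
          have := pow_le_pow_left₀ (norm_nonneg a) ha k
          gcongr
      _ ≤ (↑(k + 1) : ℝ) * M ^ ((k + 1) - 1) * ‖a - b‖ := by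
          rcases Nat.eq_zero_or_pos k with rfl | hk
          · simp
          · have : M ^ (k - 1) * M = M ^ k := by
              rw [← pow_succ]; congr 1; omega
            have e : (k : ℝ) * M ^ (k - 1) * ‖a - b‖ * M = (k : ℝ) * M ^ k * ‖a - b‖ := by
              rw [mul_comm ((k : ℝ) * M ^ (k - 1) * ‖a - b‖) M]
              rw [show (k : ℝ) * M ^ (k - 1) * ‖a - b‖ = M ^ (k-1) * ((k:ℝ) * ‖a - b‖) by ring,
                ← mul_assoc, mul_comm M (M ^ (k-1)), this]
              ring
            rw [e]
            simp only [Nat.add_sub_cancel]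
            push_cast
            nlinarith [norm_nonneg (a - b), pow_nonneg hM k]

lemma norm_t_mul_I (t : ℝ) : ‖(t : ℂ) * Complex.I‖ = |t| := by
  rw [norm_mul, Complex.norm_I, mul_one, Complex.norm_real, Real.norm_eq_abs]

lemma key_pointwise {t : ℝ} (h0 : 0 ≤ t) (h1 : t ≤ 1) (k : ℕ) :
    ‖(Complex.exp ((t : ℂ) * Complex.I) - 1) ^ k - ((t : ℂ) * Complex.I) ^ k‖ ≤
      k * 2 ^ (k - 1) * t ^ (k + 1) := by
  have habs : ‖(t : ℂ) * Complex.I‖ ≤ 1 := by rw [norm_t_mul_I, abs_of_nonneg h0]; exact h1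
  have h1' : ‖Complex.exp ((t : ℂ) * Complex.I) - 1‖ ≤ 2 * t := by
    have := Complex.norm_exp_sub_one_le (x := (t : ℂ) * Complex.I) habs
    rwa [norm_t_mul_I, abs_of_nonneg h0] at this
  have h2' : ‖(t : ℂ) * Complex.I‖ ≤ 2 * t := by
    rw [norm_t_mul_I, abs_of_nonneg h0]; linarith
  have habs2 : ‖(t : ℂ) * Complex.I‖ = t := by
    rw [norm_t_mul_I, abs_of_nonneg h0]
  have h3' : ‖(Complex.exp ((t : ℂ) * Complex.I) - 1) - (t : ℂ) * Complex.I‖ ≤ t ^ 2 := by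
    have := Complex.norm_exp_sub_one_sub_id_le (x := (t : ℂ) * Complex.I)
      (by rw [habs2]; exact h1)
    rw [habs2] at this
    simpa [sub_sub] using this
  calc ‖(Complex.exp ((t : ℂ) * Complex.I) - 1) ^ k - ((t : ℂ) * Complex.I) ^ k‖
      ≤ k * (2 * t) ^ (k - 1) * ‖(Complex.exp ((t : ℂ) * Complex.I) - 1) - (t : ℂ) * Complex.I‖ :=
        norm_pow_sub_pow' _ _ (2 * t) h1' h2' k
    _ ≤ k * (2 * t) ^ (k - 1) * t ^ 2 := by gcongr
    _ ≤ k * 2 ^ (k - 1) * t ^ (k + 1) := by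
        rcases Nat.eq_zero_or_pos k with rfl | hk
        · simp
        · rw [mul_pow]
          have : t ^ (k - 1) * t ^ 2 = t ^ (k + 1) := by
            rw [← pow_add]; congr 1; omega
          calc (k : ℝ) * (2 ^ (k - 1) * t ^ (k - 1)) * t ^ 2
              = (k : ℝ) * 2 ^ (k - 1) * (t ^ (k - 1) * t ^ 2) := by ring
            _ = k * 2 ^ (k - 1) * t ^ (k + 1) := by rw [this]
            _ ≤ k * 2 ^ (k - 1) * t ^ (k + 1) := le_refl _


lemma comparison {α : Type*} [MeasurableSpace α] {μ : Measure α} (v : α → ℝ) (h : ℝ) (hh : 0 < h)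
    (hae : ∀ᵐ a ∂μ, 0 ≤ v a ∧ h * v a ≤ 1) (k : ℕ)
    (int1 : Integrable (fun a => (Complex.exp ((h : ℂ) * Complex.I * (v a : ℂ)) - 1) ^ k) μ)
    (int2 : Integrable (fun a => v a ^ k) μ)
    (int3 : Integrable (fun a => v a ^ (k + 1)) μ) :
    ‖(∫ a, (Complex.exp ((h : ℂ) * Complex.I * (v a : ℂ)) - 1) ^ k ∂μ) -
      ((h : ℂ) * Complex.I) ^ k * ((∫ a, v a ^ k ∂μ : ℝ) : ℂ)‖ ≤
      k * 2 ^ (k - 1) * h ^ (k + 1) * ∫ a, v a ^ (k + 1) ∂μ := by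
  have hGfun : ∀ a, (((h * v a : ℝ) : ℂ) * Complex.I) ^ k
      = ((h : ℂ) * Complex.I) ^ k * (((v a ^ k : ℝ)) : ℂ) := by
    intro a; push_cast; ring
  have intG : Integrable (fun a => (((h * v a : ℝ) : ℂ) * Complex.I) ^ k) μ := by
    have : Integrable (fun a => ((h : ℂ) * Complex.I) ^ k * (((v a ^ k : ℝ)) : ℂ)) μ :=
      (int2.ofReal).const_mul _
    exact this.congr (Filter.Eventually.of_forall fun a => (hGfun a).symm)
  have hG : ((h : ℂ) * Complex.I) ^ k * ((∫ a, v a ^ k ∂μ : ℝ) : ℂ)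
      = ∫ a, (((h * v a : ℝ) : ℂ) * Complex.I) ^ k ∂μ := by
    simp only [hGfun]
    rw [MeasureTheory.integral_const_mul]
    congr 1
    exact (integral_ofReal (𝕜 := ℂ) (f := fun a => v a ^ k)).symm
  rw [hG, ← integral_sub int1 intG]
  refine le_trans (norm_integral_le_of_norm_le
      (int3.const_mul ((k : ℝ) * 2 ^ (k - 1) * h ^ (k + 1))) ?_) ?_
  · filter_upwards [hae] with a ha
    obtain ⟨h0, h1t⟩ := ha
    have harg : (h : ℂ) * Complex.I * (v a : ℂ) = ((h * v a : ℝ) : ℂ) * Complex.I := by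
      push_cast; ring
    rw [harg]
    calc ‖(Complex.exp (((h * v a : ℝ) : ℂ) * Complex.I) - 1) ^ k -
          (((h * v a : ℝ) : ℂ) * Complex.I) ^ k‖
        ≤ k * 2 ^ (k - 1) * (h * v a) ^ (k + 1) :=
          key_pointwise (mul_nonneg hh.le h0) h1t k
      _ = k * 2 ^ (k - 1) * h ^ (k + 1) * v a ^ (k + 1) := by rw [mul_pow]; ring
  · rw [MeasureTheory.integral_const_mul]

lemma one_sub_cos_ge {t : ℝ} (h0 : 0 ≤ t) (h1 : t ≤ 1) : t ^ 2 / 3 ≤ 1 - Real.cos t := by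
  have hs : Real.sin (t / 2) ^ 2 = 1 / 2 - Real.cos t / 2 := by
    have := Real.sin_sq_eq_half_sub (x := t / 2)
    rwa [show 2 * (t / 2) = t by ring] at this
  rcases eq_or_lt_of_le h0 with rfl | ht
  · simp
  · have hgt := Real.sin_gt_sub_cube (by positivity : 0 < t / 2)
    have hnn : 0 ≤ Real.sin (t / 2) := Real.sin_nonneg_of_nonneg_of_le_pi (by positivity)
      (by nlinarith [Real.pi_gt_three])
    have ht2 : t ^ 2 ≤ 1 := by nlinarith
    have htc : 0 ≤ t * (1 - t ^ 2) := mul_nonneg ht.le (by linarith)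
    have hlb : (15 : ℝ) / 32 * t ≤ Real.sin (t / 2) := by nlinarith [hgt, htc]
    have hsq := mul_le_mul hlb hlb (by positivity) hnn
    nlinarith [hsq, hs, sq_nonneg t]

lemma norm_exp_I_sub_one_le_two (t : ℝ) : ‖Complex.exp ((t : ℂ) * Complex.I) - 1‖ ≤ 2 := by
  calc ‖Complex.exp ((t : ℂ) * Complex.I) - 1‖
      ≤ ‖Complex.exp ((t : ℂ) * Complex.I)‖ + ‖(1 : ℂ)‖ := norm_sub_le _ _
    _ = 2 := by rw [norm_exp_mul_I]; norm_num

lemma norm_exp_I_sub_one_le {t : ℝ} (h : |t| ≤ 1) :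
    ‖Complex.exp ((t : ℂ) * Complex.I) - 1‖ ≤ 2 * |t| := by
  have := Complex.norm_exp_sub_one_le (x := (t : ℂ) * Complex.I)
    (by rw [norm_t_mul_I]; exact h)
  rw [norm_t_mul_I] at this
  exact this

section NuSide

variable {ν : Measure ℝ} {τ : ℝ}

lemma haes (hτ : 0 < τ) (hsupp : ν (Set.Ioc 0 (τ ^ 2))ᶜ = 0) :
    ∀ᵐ x ∂ν, x ∈ Set.Ioc 0 (τ ^ 2) := by
  change {x | x ∈ Set.Ioc 0 (τ ^ 2)} ∈ ae ν
  exact MeasureTheory.mem_ae_iff.mpr hsupp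

lemma int_min (hτ : 0 < τ) (hsupp : ν (Set.Ioc 0 (τ ^ 2))ᶜ = 0)
    (hlevy : ∫⁻ x, ENNReal.ofReal (min 1 x) ∂ν < ⊤) :
    Integrable (fun x => min 1 x) ν := by
  refine ⟨(continuous_const.min continuous_id).aestronglyMeasurable, ?_⟩
  rw [hasFiniteIntegral_iff_ofReal ?_]
  · exact hlevy
  · filter_upwards [haes hτ hsupp] with x hx
    exact le_min (by norm_num) hx.1.le

lemma int_id (hτ : 0 < τ) (hsupp : ν (Set.Ioc 0 (τ ^ 2))ᶜ = 0)
    (hlevy : ∫⁻ x, ENNReal.ofReal (min 1 x) ∂ν < ⊤) :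
    Integrable (fun x : ℝ => x) ν := by
  refine Integrable.mono' ((int_min hτ hsupp hlevy).const_mul (max 1 (τ ^ 2)))
    continuous_id.aestronglyMeasurable ?_
  filter_upwards [haes hτ hsupp] with x hx
  rw [Real.norm_eq_abs, abs_of_nonneg hx.1.le]
  rcases le_total x 1 with hx1 | hx1
  · rw [min_eq_right hx1]
    exact le_mul_of_one_le_left hx.1.le (le_max_left _ _)
  · rw [min_eq_left hx1]
    calc x ≤ τ ^ 2 := hx.2
      _ ≤ max 1 (τ ^ 2) * 1 := by rw [mul_one]; exact le_max_right _ _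

lemma int_pow (hτ : 0 < τ) (hsupp : ν (Set.Ioc 0 (τ ^ 2))ᶜ = 0)
    (hlevy : ∫⁻ x, ENNReal.ofReal (min 1 x) ∂ν < ⊤) (m : ℕ) (hm : 1 ≤ m) :
    Integrable (fun x : ℝ => x ^ m) ν := by
  refine Integrable.mono' ((int_id hτ hsupp hlevy).const_mul ((τ ^ 2) ^ (m - 1)))
    (measurable_id.pow_const m).aestronglyMeasurable ?_
  filter_upwards [haes hτ hsupp] with x hx
  rw [Real.norm_eq_abs, abs_of_nonneg (pow_nonneg hx.1.le m)]
  have hxm : x ^ m = x ^ (m - 1) * x := by rw [← pow_succ]; congr 1; omega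
  rw [hxm]
  exact mul_le_mul_of_nonneg_right (pow_le_pow_left₀ hx.1.le hx.2 _) hx.1.le

lemma int_exp_sub_one (hτ : 0 < τ) (hsupp : ν (Set.Ioc 0 (τ ^ 2))ᶜ = 0)
    (hlevy : ∫⁻ x, ENNReal.ofReal (min 1 x) ∂ν < ⊤) (θ : ℝ) :
    Integrable (fun x : ℝ => Complex.exp ((θ : ℂ) * Complex.I * (x : ℂ)) - 1) ν := by
  set C : ℝ := 2 + 2 * |θ| * max 1 (τ ^ 2) with hC
  have hC2 : (2 : ℝ) ≤ C := by
    have : 0 ≤ 2 * |θ| * max 1 (τ ^ 2) := by positivity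
    linarith
  refine Integrable.mono' ((int_min hτ hsupp hlevy).const_mul C)
    (((Complex.continuous_exp.comp (continuous_const.mul
      Complex.continuous_ofReal)).sub continuous_const).aestronglyMeasurable) ?_
  filter_upwards [haes hτ hsupp] with x hx
  have harg : (θ : ℂ) * Complex.I * (x : ℂ) = ((θ * x : ℝ) : ℂ) * Complex.I := by
    push_cast; ring
  rw [harg]
  have hmax : (1 : ℝ) ≤ max 1 (τ ^ 2) := le_max_left _ _
  by_cases hc : |θ * x| ≤ 1
  · refine le_trans (norm_exp_I_sub_one_le hc) ?_
    rw [abs_mul, abs_of_nonneg hx.1.le]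
    rcases le_total x 1 with hx1 | hx1
    · rw [min_eq_right hx1]
      have h1 : |θ| * x ≤ |θ| * (max 1 (τ ^ 2)) * x :=
        mul_le_mul_of_nonneg_right (le_mul_of_one_le_right (abs_nonneg θ) hmax) hx.1.le
      nlinarith [hx.1.le]
    · rw [min_eq_left hx1]
      have hxm : x ≤ max 1 (τ ^ 2) := le_trans hx.2 (le_max_right _ _)
      have h1 : |θ| * x ≤ |θ| * max 1 (τ ^ 2) :=
        mul_le_mul_of_nonneg_left hxm (abs_nonneg θ)
      nlinarith
  · refine le_trans (norm_exp_I_sub_one_le_two _) ?_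
    push_neg at hc
    rw [abs_mul, abs_of_nonneg hx.1.le] at hc
    rcases le_total 1 x with hx1 | hx1
    · rw [min_eq_left hx1]
      nlinarith
    · rw [min_eq_right hx1]
      nlinarith [abs_nonneg θ, hx.1.le]

lemma int_pow_E (hτ : 0 < τ) (hsupp : ν (Set.Ioc 0 (τ ^ 2))ᶜ = 0)
    (hlevy : ∫⁻ x, ENNReal.ofReal (min 1 x) ∂ν < ⊤) (h : ℝ) (k : ℕ) (hk : 1 ≤ k) :
    Integrable (fun x : ℝ => (Complex.exp ((h : ℂ) * Complex.I * (x : ℂ)) - 1) ^ k) ν := by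
  refine Integrable.mono' (((int_exp_sub_one hτ hsupp hlevy h).norm).const_mul (2 ^ (k - 1)))
    ((((Complex.continuous_exp.comp (continuous_const.mul
      Complex.continuous_ofReal)).sub continuous_const).pow k).aestronglyMeasurable) ?_
  refine Filter.Eventually.of_forall fun x => ?_
  rw [norm_pow]
  have h2 : ‖Complex.exp ((h : ℂ) * Complex.I * (x : ℂ)) - 1‖ ≤ 2 := by
    have harg : (h : ℂ) * Complex.I * (x : ℂ) = ((h * x : ℝ) : ℂ) * Complex.I := by
      push_cast; ring
    rw [harg]; exact norm_exp_I_sub_one_le_two _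
  have hsplit : ‖Complex.exp ((h : ℂ) * Complex.I * (x : ℂ)) - 1‖ ^ k =
      ‖Complex.exp ((h : ℂ) * Complex.I * (x : ℂ)) - 1‖ ^ (k - 1) *
      ‖Complex.exp ((h : ℂ) * Complex.I * (x : ℂ)) - 1‖ := by
    rw [← pow_succ]; congr 1; omega
  rw [hsplit]
  exact mul_le_mul_of_nonneg_right (pow_le_pow_left₀ (norm_nonneg _) h2 _) (norm_nonneg _)

end NuSide

lemma intP_pow {Ω : Type*} [MeasurableSpace Ω] (P : Measure Ω) [IsProbabilityMeasure P]
    (Y : Ω → ℝ) (hY : Measurable Y) (c : ℝ) (hb : ∀ ω, Y ω ∈ Set.Icc 0 c) (m : ℕ) :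
    Integrable (fun ω => Y ω ^ m) P := by
  refine Integrable.mono' (integrable_const (c ^ m)) ((hY.pow_const m).aestronglyMeasurable) ?_
  refine Filter.Eventually.of_forall fun ω => ?_
  rw [Real.norm_eq_abs, abs_of_nonneg (pow_nonneg (hb ω).1 m)]
  exact pow_le_pow_left₀ (hb ω).1 (hb ω).2 m

lemma Bn_eq {Ω : Type*} [MeasurableSpace Ω] (P : Measure Ω) [IsProbabilityMeasure P]
    (Y : Ω → ℝ) (hY : Measurable Y) (h : ℝ) (n : ℕ) (k : ℕ) (hk : 1 ≤ k)
    (φval : ℝ → ℂ)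
    (hφv : ∀ θ : ℝ, φval θ = ∫ ω, Complex.exp ((θ : ℂ) * Complex.I * (Y ω : ℂ)) ∂P) :
    (dd h)^[k] (fun θ => (n : ℂ) * (φval θ - 1)) 0 =
    (n : ℂ) * ∫ ω, (Complex.exp ((h : ℂ) * Complex.I * (Y ω : ℂ)) - 1) ^ k ∂P := by
  have hfun : (fun θ : ℝ => (n : ℂ) * (φval θ - 1)) =
      fun θ : ℝ => (n : ℂ) *
        (∫ ω, Complex.exp ((θ : ℂ) * Complex.I * (Y ω : ℂ)) * (1 : ℂ) ∂P) + (-(n : ℂ)) := by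
    funext θ; rw [hφv θ]; simp only [mul_one]; ring
  rw [hfun, iter_dd_const_mul_add h _ _ _ k hk]
  show (n : ℂ) * (dd h)^[k]
      (fun θ : ℝ => ∫ ω, Complex.exp ((θ : ℂ) * Complex.I * (Y ω : ℂ)) * (1 : ℂ) ∂P) 0 = _
  rw [iter_dd_integral h Y hY (fun _ => (1 : ℂ)) (integrable_const 1) k 0]
  congr 1
  simp

lemma dd_psi {ν : Measure ℝ} {τ : ℝ} (hτ : 0 < τ) (hsupp : ν (Set.Ioc 0 (τ ^ 2))ᶜ = 0)
    (hlevy : ∫⁻ x, ENNReal.ofReal (min 1 x) ∂ν < ⊤) (σ2 : ℝ) (h : ℝ) :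
    dd h (fun θ : ℝ => (θ : ℂ) * Complex.I * (σ2 : ℂ) +
        ∫ x, (Complex.exp ((θ : ℂ) * Complex.I * (x : ℂ)) - 1) ∂ν) =
    fun θ : ℝ => (1 : ℂ) * (∫ x, Complex.exp ((θ : ℂ) * Complex.I * (x : ℂ)) *
        (Complex.exp ((h : ℂ) * Complex.I * (x : ℂ)) - 1) ∂ν) +
      (h : ℂ) * Complex.I * (σ2 : ℂ) := by
  funext θ
  rw [dd_apply]
  have hsub : (∫ x, (Complex.exp (((θ + h : ℝ) : ℂ) * Complex.I * (x : ℂ)) - 1) ∂ν) -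
      (∫ x, (Complex.exp ((θ : ℂ) * Complex.I * (x : ℂ)) - 1) ∂ν) =
      ∫ x, Complex.exp ((θ : ℂ) * Complex.I * (x : ℂ)) *
        (Complex.exp ((h : ℂ) * Complex.I * (x : ℂ)) - 1) ∂ν := by
    rw [← integral_sub (int_exp_sub_one hτ hsupp hlevy (θ + h))
      (int_exp_sub_one hτ hsupp hlevy θ)]
    congr 1
    funext x
    have hexp : Complex.exp (((θ + h : ℝ) : ℂ) * Complex.I * (x : ℂ)) =
        Complex.exp ((θ : ℂ) * Complex.I * (x : ℂ)) *
        Complex.exp ((h : ℂ) * Complex.I * (x : ℂ)) := by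
      rw [← Complex.exp_add]; congr 1; push_cast; ring
    rw [hexp]; ring
  have hlin : ((θ + h : ℝ) : ℂ) * Complex.I * (σ2 : ℂ) - (θ : ℂ) * Complex.I * (σ2 : ℂ) =
      (h : ℂ) * Complex.I * (σ2 : ℂ) := by push_cast; ring
  calc ((θ + h : ℝ) : ℂ) * Complex.I * (σ2 : ℂ) +
        (∫ x, (Complex.exp (((θ + h : ℝ) : ℂ) * Complex.I * (x : ℂ)) - 1) ∂ν) -
        ((θ : ℂ) * Complex.I * (σ2 : ℂ) +
        ∫ x, (Complex.exp ((θ : ℂ) * Complex.I * (x : ℂ)) - 1) ∂ν)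
      = (((θ + h : ℝ) : ℂ) * Complex.I * (σ2 : ℂ) - (θ : ℂ) * Complex.I * (σ2 : ℂ)) +
        ((∫ x, (Complex.exp (((θ + h : ℝ) : ℂ) * Complex.I * (x : ℂ)) - 1) ∂ν) -
        (∫ x, (Complex.exp ((θ : ℂ) * Complex.I * (x : ℂ)) - 1) ∂ν)) := by ring
    _ = (1 : ℂ) * (∫ x, Complex.exp ((θ : ℂ) * Complex.I * (x : ℂ)) *
        (Complex.exp ((h : ℂ) * Complex.I * (x : ℂ)) - 1) ∂ν) +
        (h : ℂ) * Complex.I * (σ2 : ℂ) := by rw [hsub, hlin]; ring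

lemma Bnu_eq_one {ν : Measure ℝ} {τ : ℝ} (hτ : 0 < τ) (hsupp : ν (Set.Ioc 0 (τ ^ 2))ᶜ = 0)
    (hlevy : ∫⁻ x, ENNReal.ofReal (min 1 x) ∂ν < ⊤) (σ2 : ℝ) (h : ℝ) :
    (dd h)^[1] (fun θ : ℝ => (θ : ℂ) * Complex.I * (σ2 : ℂ) +
        ∫ x, (Complex.exp ((θ : ℂ) * Complex.I * (x : ℂ)) - 1) ∂ν) 0 =
    (h : ℂ) * Complex.I * (σ2 : ℂ) +
      ∫ x, (Complex.exp ((h : ℂ) * Complex.I * (x : ℂ)) - 1) ^ 1 ∂ν := by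
  rw [Function.iterate_one, dd_psi hτ hsupp hlevy σ2 h]
  simp only [Complex.ofReal_zero, zero_mul, Complex.exp_zero, one_mul, pow_one]
  rw [add_comm]

lemma Bnu_eq_ge2 {ν : Measure ℝ} {τ : ℝ} (hτ : 0 < τ) (hsupp : ν (Set.Ioc 0 (τ ^ 2))ᶜ = 0)
    (hlevy : ∫⁻ x, ENNReal.ofReal (min 1 x) ∂ν < ⊤) (σ2 : ℝ) (h : ℝ)
    (k : ℕ) (hk : 2 ≤ k) :
    (dd h)^[k] (fun θ : ℝ => (θ : ℂ) * Complex.I * (σ2 : ℂ) +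
        ∫ x, (Complex.exp ((θ : ℂ) * Complex.I * (x : ℂ)) - 1) ∂ν) 0 =
    ∫ x, (Complex.exp ((h : ℂ) * Complex.I * (x : ℂ)) - 1) ^ k ∂ν := by
  obtain ⟨m, rfl⟩ : ∃ m, k = m + 1 := ⟨k - 1, by omega⟩
  have hm : 1 ≤ m := by omega
  rw [Function.iterate_succ_apply, dd_psi hτ hsupp hlevy σ2 h,
    iter_dd_const_mul_add h 1 _ _ m hm]
  show (1 : ℂ) * (dd h)^[m] (fun θ : ℝ => ∫ x, Complex.exp ((θ : ℂ) * Complex.I * (x : ℂ)) *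
      (Complex.exp ((h : ℂ) * Complex.I * (x : ℂ)) - 1) ∂ν) 0 = _
  rw [iter_dd_integral h (fun x : ℝ => x) measurable_id
      (fun x : ℝ => Complex.exp ((h : ℂ) * Complex.I * (x : ℂ)) - 1)
      (int_exp_sub_one hτ hsupp hlevy h) m 0]
  rw [one_mul]
  congr 1
  funext x
  simp only [Complex.ofReal_zero, zero_mul, Complex.exp_zero, one_mul]
  rw [← pow_succ]

lemma second_moment_bound {Ω : Type*} [MeasurableSpace Ω] (P : Measure Ω)
    [IsProbabilityMeasure P] (Y : Ω → ℝ) (hY : Measurable Y) (τ : ℝ) (hτ : 0 < τ)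
    (hb : ∀ ω, Y ω ∈ Set.Icc 0 (τ ^ 2)) (n : ℕ) (φv : ℂ)
    (hφv : φv = ∫ ω, Complex.exp ((((τ ^ 2)⁻¹ : ℝ) : ℂ) * Complex.I * (Y ω : ℂ)) ∂P)
    (M : ℝ) (hM : ‖(n : ℂ) * (φv - 1)‖ ≤ M) :
    (n : ℝ) * ∫ ω, Y ω ^ 2 ∂P ≤ 3 * (τ ^ 2) ^ 2 * M := by
  have hτ2 : (0 : ℝ) < τ ^ 2 := by positivity
  set θ0 : ℝ := (τ ^ 2)⁻¹ with hθ0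
  have hθ0pos : 0 < θ0 := by positivity
  have hexp_int : Integrable (fun ω => Complex.exp ((θ0 : ℂ) * Complex.I * (Y ω : ℂ))) P := by
    refine Integrable.mono' (integrable_const 1)
      ((Complex.measurable_exp.comp (measurable_const.mul
        (Complex.measurable_ofReal.comp hY))).aestronglyMeasurable) ?_
    exact Filter.Eventually.of_forall fun ω => le_of_eq (norm_exp3 θ0 (Y ω))
  have hre : φv.re = ∫ ω, Real.cos (θ0 * Y ω) ∂P := by
    rw [hφv]
    have h1 := integral_re hexp_int
    simp only [RCLike.re_to_complex] at h1
    rw [← h1]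
    congr 1
    funext ω
    rw [show (θ0 : ℂ) * Complex.I * (Y ω : ℂ) = ((θ0 * Y ω : ℝ) : ℂ) * Complex.I by
      push_cast; ring]
    exact Complex.exp_ofReal_mul_I_re _
  have hcos_int : Integrable (fun ω => Real.cos (θ0 * Y ω)) P := by
    refine Integrable.mono' (integrable_const 1)
      ((Real.measurable_cos.comp (measurable_const.mul hY)).aestronglyMeasurable) ?_
    exact Filter.Eventually.of_forall fun ω => by
      rw [Real.norm_eq_abs]; exact Real.abs_cos_le_one _
  have hY2int : Integrable (fun ω => Y ω ^ 2) P := intP_pow P Y hY (τ ^ 2) hb 2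
  have hpt : ∀ ω, θ0 ^ 2 / 3 * Y ω ^ 2 ≤ 1 - Real.cos (θ0 * Y ω) := by
    intro ω
    have h0 : 0 ≤ θ0 * Y ω := mul_nonneg hθ0pos.le (hb ω).1
    have h1 : θ0 * Y ω ≤ 1 := by
      calc θ0 * Y ω ≤ θ0 * τ ^ 2 := mul_le_mul_of_nonneg_left (hb ω).2 hθ0pos.le
        _ = 1 := inv_mul_cancel₀ (ne_of_gt hτ2)
    have := one_sub_cos_ge h0 h1
    calc θ0 ^ 2 / 3 * Y ω ^ 2 = (θ0 * Y ω) ^ 2 / 3 := by ring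
      _ ≤ 1 - Real.cos (θ0 * Y ω) := this
  have hmono : θ0 ^ 2 / 3 * ∫ ω, Y ω ^ 2 ∂P ≤ 1 - φv.re := by
    have h1 : ∫ ω, θ0 ^ 2 / 3 * Y ω ^ 2 ∂P ≤ ∫ ω, (1 - Real.cos (θ0 * Y ω)) ∂P :=
      integral_mono (hY2int.const_mul _) ((integrable_const 1).sub hcos_int) hpt
    rw [MeasureTheory.integral_const_mul] at h1
    rw [integral_sub (integrable_const 1) hcos_int, integral_const] at h1
    simpa [hre] using h1
  have hre_bound : (n : ℝ) * (1 - φv.re) ≤ M := by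
    have h1 : ((n : ℂ) * (φv - 1)).re = (n : ℝ) * (φv.re - 1) := by
      simp [Complex.mul_re]
    have h2 : -(((n : ℂ) * (φv - 1)).re) ≤ ‖(n : ℂ) * (φv - 1)‖ := by
      calc -(((n : ℂ) * (φv - 1)).re) ≤ |((n : ℂ) * (φv - 1)).re| := neg_le_abs _
        _ ≤ ‖(n : ℂ) * (φv - 1)‖ := Complex.abs_re_le_norm _
    rw [h1] at h2
    calc (n : ℝ) * (1 - φv.re) = -((n : ℝ) * (φv.re - 1)) := by ring
      _ ≤ ‖(n : ℂ) * (φv - 1)‖ := h2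
      _ ≤ M := hM
  have hchain : (n : ℝ) * (θ0 ^ 2 / 3 * ∫ ω, Y ω ^ 2 ∂P) ≤ M := by
    calc (n : ℝ) * (θ0 ^ 2 / 3 * ∫ ω, Y ω ^ 2 ∂P) ≤ (n : ℝ) * (1 - φv.re) :=
          mul_le_mul_of_nonneg_left hmono (Nat.cast_nonneg n)
      _ ≤ M := hre_bound
  have hId : (n : ℝ) * ∫ ω, Y ω ^ 2 ∂P =
      3 * (τ ^ 2) ^ 2 * ((n : ℝ) * (θ0 ^ 2 / 3 * ∫ ω, Y ω ^ 2 ∂P)) := by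
    have : θ0 * τ ^ 2 = 1 := inv_mul_cancel₀ (ne_of_gt hτ2)
    field_simp [hθ0]
    linear_combination (-((n : ℝ) * ∫ ω, Y ω ^ 2 ∂P) * (1 + θ0 * τ ^ 2)) * this
  rw [hId]
  have h30 : (0 : ℝ) ≤ 3 * (τ ^ 2) ^ 2 := by positivity
  exact mul_le_mul_of_nonneg_left hchain h30

end CFEM
end CFEM

open CFEM

set_option maxHeartbeats 1000000 in
/-- If `Xₙ` are uniformly bounded nonnegative random variables whose scaled characteristic
function differences `n(φₙ(θ) - 1)` converge uniformly on compacts to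
`iθσ² + ∫ (e^{iθx} - 1) dν` for a finite-moment Lévy measure `ν` supported in `(0, τ²]`,
then `n E[Xₙ^k]` converges to `σ² + ∫ x dν` for `k = 1` and to `∫ x^k dν` for `k ≥ 2`. -/
theorem char_function_expansion_moments {Ω : Type*} [MeasurableSpace Ω] (P : Measure Ω)
    [IsProbabilityMeasure P] (X : ℕ → Ω → ℝ) (hmeas : ∀ n, Measurable (X n))
    (τ : ℝ) (hτ : 0 < τ) (hbd : ∀ n ω, X n ω ∈ Set.Icc 0 (τ ^ 2))
    (σ2 : ℝ) (hσ2 : 0 ≤ σ2) (ν : Measure ℝ)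
    (hsupp : ν (Set.Ioc 0 (τ ^ 2))ᶜ = 0)
    (hlevy : ∫⁻ x, ENNReal.ofReal (min 1 x) ∂ν < ⊤)
    (φ : ℕ → ℝ → ℂ) (hφ : ∀ n θ, φ n θ = ∫ ω, Complex.exp ((θ : ℂ) * Complex.I * (X n ω : ℂ)) ∂P)
    (hconv : ∀ K : Set ℝ, IsCompact K →
      TendstoUniformlyOn (fun (n : ℕ) (θ : ℝ) => (n : ℂ) * (φ n θ - 1))
        (fun θ : ℝ => (θ : ℂ) * Complex.I * (σ2 : ℂ) +
          ∫ x, (Complex.exp ((θ : ℂ) * Complex.I * (x : ℂ)) - 1) ∂ν)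
        atTop K) :
    ∀ k : ℕ, 1 ≤ k →
      Tendsto (fun n : ℕ => (n : ℝ) * ∫ ω, (X n ω) ^ k ∂P) atTop
        (nhds (if k = 1 then σ2 + ∫ x, x ∂ν else ∫ x, x ^ k ∂ν)) := by
  intro k hk
  have hτ2 : (0 : ℝ) < τ ^ 2 := by positivity
  set ψ : ℝ → ℂ := fun θ : ℝ => (θ : ℂ) * Complex.I * (σ2 : ℂ) +
      ∫ x, (Complex.exp ((θ : ℂ) * Complex.I * (x : ℂ)) - 1) ∂ν with hψdef
  have hpt : ∀ θ : ℝ, Tendsto (fun n : ℕ => (n : ℂ) * (φ n θ - 1)) atTop (nhds (ψ θ)) :=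
    fun θ => (hconv {θ} isCompact_singleton).tendsto_at (Set.mem_singleton θ)
  have haesν := haes hτ hsupp
  have intν1 : Integrable (fun x : ℝ => x ^ k) ν := int_pow hτ hsupp hlevy k hk
  have intν2 : Integrable (fun x : ℝ => x ^ (k + 1)) ν := int_pow hτ hsupp hlevy (k + 1) (by omega)
  set Cν : ℝ := ∫ x, x ^ (k + 1) ∂ν with hCν
  have hCν0 : 0 ≤ Cν := integral_nonneg_of_ae
    (by filter_upwards [haesν] with x hx using pow_nonneg hx.1.le _)
  set θ0 : ℝ := (τ ^ 2)⁻¹ with hθ0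
  set M : ℝ := ‖ψ θ0‖ + 1 with hMdef
  have hM0 : 0 < M := by positivity
  set C1 : ℝ := k * 2 ^ (k - 1) * ((τ ^ 2) ^ (k - 1) * (3 * (τ ^ 2) ^ 2 * M)) with hC1
  set C3 : ℝ := k * 2 ^ (k - 1) * Cν with hC3
  have hC10 : 0 ≤ C1 := by positivity
  have hC30 : 0 ≤ C3 := by positivity
  set T : ℝ := if k = 1 then σ2 + ∫ x, x ∂ν else ∫ x, x ^ k ∂ν with hT
  rw [Metric.tendsto_nhds]
  intro ε hε
  set C : ℝ := C1 + C3 with hC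
  have hC0 : 0 ≤ C := by rw [hC]; linarith
  set h : ℝ := min ((τ ^ 2)⁻¹) (ε / (3 * (C + 1))) with hhdef
  have hhpos : 0 < h := lt_min (by positivity) (by positivity)
  have hhτ : h * τ ^ 2 ≤ 1 := by
    have h1 : h ≤ (τ ^ 2)⁻¹ := min_le_left _ _
    calc h * τ ^ 2 ≤ (τ ^ 2)⁻¹ * τ ^ 2 := mul_le_mul_of_nonneg_right h1 hτ2.le
      _ = 1 := inv_mul_cancel₀ (ne_of_gt hτ2)
  have hCh : C * h < ε / 3 := by
    have h2 : h ≤ ε / (3 * (C + 1)) := min_le_right _ _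
    have h3 : C * h ≤ C * (ε / (3 * (C + 1))) := mul_le_mul_of_nonneg_left h2 hC0
    have hC1p : (0 : ℝ) < C + 1 := by linarith
    have h4 : C * (ε / (3 * (C + 1))) < ε / 3 := by
      set D : ℝ := ε / (3 * (C + 1)) with hD
      have hDpos : 0 < D := by positivity
      have hDe : D * (3 * (C + 1)) = ε := div_mul_cancel₀ _ (by positivity)
      nlinarith [hDe, hDpos]
    linarith
  -- the iterated differences
  set F : ℕ → ℝ → ℂ := fun n θ => (n : ℂ) * (φ n θ - 1) with hF
  set Bn : ℕ → ℂ := fun n => (dd h)^[k] (F n) 0 with hBndef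
  set B : ℂ := (dd h)^[k] ψ 0 with hBdef
  have hBtend : Tendsto Bn atTop (nhds B) := iter_dd_tendsto h F ψ hpt k 0
  have hT2 : ∀ᶠ n in atTop, ‖Bn n - B‖ < ε / 3 * h ^ k := by
    have h5 := (Metric.tendsto_nhds.mp hBtend) (ε / 3 * h ^ k) (by positivity)
    filter_upwards [h5] with n hn
    rwa [dist_eq_norm] at hn
  have hBn_eq : ∀ n : ℕ, Bn n = (n : ℂ) *
      ∫ ω, (Complex.exp ((h : ℂ) * Complex.I * (X n ω : ℂ)) - 1) ^ k ∂P :=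
    fun n => Bn_eq P (X n) (hmeas n) h n k hk (φ n) (hφ n)
  -- Term 3
  have haeν' : ∀ᵐ x ∂ν, 0 ≤ x ∧ h * x ≤ 1 := by
    filter_upwards [haesν] with x hx
    refine ⟨hx.1.le, ?_⟩
    calc h * x ≤ h * τ ^ 2 := mul_le_mul_of_nonneg_left hx.2 hhpos.le
      _ ≤ 1 := hhτ
  have intν3 : Integrable (fun x : ℝ => (Complex.exp ((h : ℂ) * Complex.I * (x : ℂ)) - 1) ^ k) ν :=
    int_pow_E hτ hsupp hlevy h k hk
  have hcompν := comparison (μ := ν) (fun x : ℝ => x) h hhpos haeν' k intν3 intν1 intν2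
  have hBT : B - ((h : ℂ) * Complex.I) ^ k * (T : ℂ) =
      (∫ x, (Complex.exp ((h : ℂ) * Complex.I * (x : ℂ)) - 1) ^ k ∂ν) -
      ((h : ℂ) * Complex.I) ^ k * ((∫ x, x ^ k ∂ν : ℝ) : ℂ) := by
    rcases eq_or_ne k 1 with hk1 | hk1
    · subst hk1
      rw [hBdef, hψdef, Bnu_eq_one hτ hsupp hlevy σ2 h, hT, if_pos rfl]
      have hint : (∫ x, x ^ 1 ∂ν : ℝ) = ∫ x, x ∂ν := by simp only [pow_one]
      rw [hint]
      push_cast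
      ring
    · rw [hBdef, hψdef, Bnu_eq_ge2 hτ hsupp hlevy σ2 h k (by omega), hT, if_neg hk1]
  have hTerm3 : ‖B - ((h : ℂ) * Complex.I) ^ k * (T : ℂ)‖ ≤ C3 * h ^ (k + 1) := by
    rw [hBT]
    refine le_trans hcompν (le_of_eq ?_)
    rw [hC3, hCν]
    ring
  -- Term 1
  have hAe : ∀ n : ℕ, ∀ᵐ ω ∂P, 0 ≤ X n ω ∧ h * X n ω ≤ 1 := fun n =>
    Filter.Eventually.of_forall fun ω => ⟨(hbd n ω).1, by
      calc h * X n ω ≤ h * τ ^ 2 := mul_le_mul_of_nonneg_left (hbd n ω).2 hhpos.le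
        _ ≤ 1 := hhτ⟩
  have intPE : ∀ n : ℕ, Integrable
      (fun ω => (Complex.exp ((h : ℂ) * Complex.I * (X n ω : ℂ)) - 1) ^ k) P := by
    intro n
    have h6 := integrable_exp_mul (μ := P) 0 h k (X n) (hmeas n)
      (fun _ => (1 : ℂ)) (integrable_const 1)
    exact h6.congr (Filter.Eventually.of_forall fun ω => by simp)
  have hcompP : ∀ n : ℕ,
      ‖(∫ ω, (Complex.exp ((h : ℂ) * Complex.I * (X n ω : ℂ)) - 1) ^ k ∂P) -
        ((h : ℂ) * Complex.I) ^ k * ((∫ ω, X n ω ^ k ∂P : ℝ) : ℂ)‖ ≤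
        k * 2 ^ (k - 1) * h ^ (k + 1) * ∫ ω, X n ω ^ (k + 1) ∂P := fun n =>
    comparison (μ := P) (X n) h hhpos (hAe n) k (intPE n)
      (intP_pow P (X n) (hmeas n) (τ ^ 2) (hbd n) k)
      (intP_pow P (X n) (hmeas n) (τ ^ 2) (hbd n) (k + 1))
  have hmom : ∀ n : ℕ, ∫ ω, X n ω ^ (k + 1) ∂P ≤ (τ ^ 2) ^ (k - 1) * ∫ ω, X n ω ^ 2 ∂P := by
    intro n
    have hptw : ∀ ω, X n ω ^ (k + 1) ≤ (τ ^ 2) ^ (k - 1) * X n ω ^ 2 := by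
      intro ω
      have h7 : X n ω ^ (k + 1) = X n ω ^ (k - 1) * X n ω ^ 2 := by
        rw [← pow_add]; congr 1; omega
      rw [h7]
      exact mul_le_mul_of_nonneg_right (pow_le_pow_left₀ (hbd n ω).1 (hbd n ω).2 _)
        (sq_nonneg _)
    calc ∫ ω, X n ω ^ (k + 1) ∂P ≤ ∫ ω, (τ ^ 2) ^ (k - 1) * X n ω ^ 2 ∂P :=
          integral_mono (intP_pow P (X n) (hmeas n) (τ ^ 2) (hbd n) (k + 1))
            ((intP_pow P (X n) (hmeas n) (τ ^ 2) (hbd n) 2).const_mul _) hptw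
      _ = (τ ^ 2) ^ (k - 1) * ∫ ω, X n ω ^ 2 ∂P :=
          MeasureTheory.integral_const_mul (μ := P) ((τ ^ 2) ^ (k - 1)) (fun ω => X n ω ^ 2)
  have hev2 : ∀ᶠ n : ℕ in atTop, (n : ℝ) * ∫ ω, X n ω ^ 2 ∂P ≤ 3 * (τ ^ 2) ^ 2 * M := by
    have h8 := (hpt θ0).norm.eventually (eventually_le_nhds (lt_add_one ‖ψ θ0‖))
    filter_upwards [h8] with n hn
    exact second_moment_bound P (X n) (hmeas n) τ hτ (hbd n) n (φ n θ0) (hφ n θ0) M hn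
  have hT1 : ∀ᶠ n : ℕ in atTop,
      ‖Bn n - ((h : ℂ) * Complex.I) ^ k * (((n : ℝ) * ∫ ω, X n ω ^ k ∂P : ℝ) : ℂ)‖ ≤
        C1 * h ^ (k + 1) := by
    filter_upwards [hev2] with n hn2
    rw [hBn_eq n]
    have hX2_0 : 0 ≤ ∫ ω, X n ω ^ 2 ∂P :=
      integral_nonneg fun ω => sq_nonneg _
    have hsplit : (n : ℂ) * (∫ ω, (Complex.exp ((h : ℂ) * Complex.I * (X n ω : ℂ)) - 1) ^ k ∂P) -
        ((h : ℂ) * Complex.I) ^ k * (((n : ℝ) * ∫ ω, X n ω ^ k ∂P : ℝ) : ℂ) =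
        (n : ℂ) * ((∫ ω, (Complex.exp ((h : ℂ) * Complex.I * (X n ω : ℂ)) - 1) ^ k ∂P) -
          ((h : ℂ) * Complex.I) ^ k * ((∫ ω, X n ω ^ k ∂P : ℝ) : ℂ)) := by
      push_cast
      ring
    rw [hsplit, norm_mul, Complex.norm_natCast]
    calc (n : ℝ) * ‖(∫ ω, (Complex.exp ((h : ℂ) * Complex.I * (X n ω : ℂ)) - 1) ^ k ∂P) -
          ((h : ℂ) * Complex.I) ^ k * ((∫ ω, X n ω ^ k ∂P : ℝ) : ℂ)‖
        ≤ (n : ℝ) * (k * 2 ^ (k - 1) * h ^ (k + 1) * ∫ ω, X n ω ^ (k + 1) ∂P) :=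
          mul_le_mul_of_nonneg_left (hcompP n) (Nat.cast_nonneg n)
      _ = k * 2 ^ (k - 1) * h ^ (k + 1) * ((n : ℝ) * ∫ ω, X n ω ^ (k + 1) ∂P) := by ring
      _ ≤ k * 2 ^ (k - 1) * h ^ (k + 1) * ((τ ^ 2) ^ (k - 1) * ((n : ℝ) * ∫ ω, X n ω ^ 2 ∂P)) := by
          have h9 : (n : ℝ) * ∫ ω, X n ω ^ (k + 1) ∂P ≤
              (τ ^ 2) ^ (k - 1) * ((n : ℝ) * ∫ ω, X n ω ^ 2 ∂P) := by
            calc (n : ℝ) * ∫ ω, X n ω ^ (k + 1) ∂P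
                ≤ (n : ℝ) * ((τ ^ 2) ^ (k - 1) * ∫ ω, X n ω ^ 2 ∂P) :=
                  mul_le_mul_of_nonneg_left (hmom n) (Nat.cast_nonneg n)
              _ = (τ ^ 2) ^ (k - 1) * ((n : ℝ) * ∫ ω, X n ω ^ 2 ∂P) := by ring
          have h10 : (0 : ℝ) ≤ k * 2 ^ (k - 1) * h ^ (k + 1) := by positivity
          exact mul_le_mul_of_nonneg_left h9 h10
      _ ≤ k * 2 ^ (k - 1) * h ^ (k + 1) * ((τ ^ 2) ^ (k - 1) * (3 * (τ ^ 2) ^ 2 * M)) := by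
          have h10 : (0 : ℝ) ≤ k * 2 ^ (k - 1) * h ^ (k + 1) := by positivity
          refine mul_le_mul_of_nonneg_left ?_ h10
          exact mul_le_mul_of_nonneg_left hn2 (by positivity)
      _ = C1 * h ^ (k + 1) := by rw [hC1]; ring
  -- combine
  filter_upwards [hT1, hT2] with n h1 h2
  rw [Real.dist_eq]
  set Ln : ℝ := (n : ℝ) * ∫ ω, X n ω ^ k ∂P with hLn
  have hnorm_hIk : ‖((h : ℂ) * Complex.I) ^ k‖ = h ^ k := by
    rw [norm_pow, norm_t_mul_I, abs_of_pos hhpos]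
  have hpk : (0 : ℝ) < h ^ k := pow_pos hhpos k
  have key : h ^ k * |Ln - T| < ε * h ^ k := by
    have e0 : h ^ k * |Ln - T| = ‖((h : ℂ) * Complex.I) ^ k * (((Ln - T : ℝ)) : ℂ)‖ := by
      rw [norm_mul, hnorm_hIk, Complex.norm_real, Real.norm_eq_abs]
    rw [e0]
    have e1 : ((h : ℂ) * Complex.I) ^ k * (((Ln - T : ℝ)) : ℂ) =
        (((h : ℂ) * Complex.I) ^ k * ((Ln : ℝ) : ℂ) - Bn n) + (Bn n - B) +
        (B - ((h : ℂ) * Complex.I) ^ k * ((T : ℝ) : ℂ)) := by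
      push_cast
      ring
    rw [e1]
    have tri : ‖(((h : ℂ) * Complex.I) ^ k * ((Ln : ℝ) : ℂ) - Bn n) + (Bn n - B) +
        (B - ((h : ℂ) * Complex.I) ^ k * ((T : ℝ) : ℂ))‖ ≤
        ‖((h : ℂ) * Complex.I) ^ k * ((Ln : ℝ) : ℂ) - Bn n‖ + ‖Bn n - B‖ +
        ‖B - ((h : ℂ) * Complex.I) ^ k * ((T : ℝ) : ℂ)‖ :=
      le_trans (norm_add_le _ _) (by gcongr; exact norm_add_le _ _)
    refine lt_of_le_of_lt tri ?_
    have e2 : ‖((h : ℂ) * Complex.I) ^ k * ((Ln : ℝ) : ℂ) - Bn n‖ =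
        ‖Bn n - ((h : ℂ) * Complex.I) ^ k * ((Ln : ℝ) : ℂ)‖ := norm_sub_rev _ _
    rw [e2]
    have hhk1 : h ^ (k + 1) = h * h ^ k := by rw [pow_succ]; ring
    have hsum : C1 * h ^ (k + 1) + C3 * h ^ (k + 1) < ε / 3 * h ^ k := by
      have : C1 * h ^ (k + 1) + C3 * h ^ (k + 1) = (C * h) * h ^ k := by
        rw [hC, hhk1]; ring
      rw [this]
      exact mul_lt_mul_of_pos_right hCh hpk |>.trans_le (le_of_eq rfl)
    have := h1
    nlinarith [h1, h2, hTerm3, hsum, hpk]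
  by_contra hcon
  push_neg at hcon
  have h11 := mul_le_mul_of_nonneg_left hcon hpk.le
  nlinarith [key]
end

section
/- Let C be the adjacency operator of the graph ℕ rooted at 1 with every edge {k, k+1} having weight σ > 0, i.e. C e_k = σ e_{k−1} + σ e_{k+1} (with e_0 := 0), acting as a self-adjoint operator on ℓ²(ℕ). Then the spectral measure of C at the vector e_1 is the semicircle law with density (2πσ²)^{−1}√(4σ² − x²) on [−2σ, 2σ]. -/
open MeasureTheory ComplexInnerProductSpace Real intervalIntegral Filter Topology
open scoped NNReal ENNReal

namespace SemicircleAux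

/-- Number of paths of length `k` on `ℕ` from `j` to `0` with steps `±1` (staying `≥ 0`). -/
def dyck : ℕ → ℕ → ℕ
  | 0, 0 => 1
  | 0, _ + 1 => 0
  | k + 1, 0 => dyck k 1
  | k + 1, j + 1 => dyck k j + dyck k (j + 2)

@[simp] lemma dyck_zero_zero : dyck 0 0 = 1 := rfl
@[simp] lemma dyck_zero_succ (j : ℕ) : dyck 0 (j + 1) = 0 := rfl
@[simp] lemma dyck_succ_zero (k : ℕ) : dyck (k + 1) 0 = dyck k 1 := rfl
@[simp] lemma dyck_succ_succ (k j : ℕ) :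
    dyck (k + 1) (j + 1) = dyck k j + dyck k (j + 2) := rfl

lemma dyck_eq_zero_of_lt : ∀ {k j : ℕ}, k < j → dyck k j = 0 := by
  intro k
  induction k with
  | zero => intro j hj; match j, hj with | j + 1, _ => rfl
  | succ k ih =>
    intro j hj
    match j, hj with
    | j + 1, hj =>
      have h1 : k < j := by omega
      have h2 : k < j + 2 := by omega
      simp [ih h1, ih h2]

lemma dyck_eq_zero_of_odd : ∀ k j : ℕ, (k + j) % 2 = 1 → dyck k j = 0 := by
  intro k
  induction k with
  | zero =>
    intro j hj
    match j, hj with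
    | j + 1, _ => rfl
  | succ k ih =>
    intro j hj
    match j with
    | 0 => have := ih 1 (by omega); simpa using this
    | j + 1 =>
      have h1 := ih j (by omega)
      have h2 := ih (j + 2) (by omega)
      simp [h1, h2]

/-- `choose` with integer (possibly negative) lower index. -/
def ch (n : ℕ) (z : ℤ) : ℤ := if 0 ≤ z then (n.choose z.toNat : ℤ) else 0

@[simp] lemma ch_neg {n : ℕ} {z : ℤ} (h : z < 0) : ch n z = 0 := by
  simp [ch, not_le.2 h]

lemma ch_nonneg_eq {n : ℕ} {m : ℕ} : ch n (m : ℤ) = (n.choose m : ℤ) := by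
  simp [ch]

lemma ch_succ (n : ℕ) (z : ℤ) : ch (n + 1) z = ch n z + ch n (z - 1) := by
  rcases lt_trichotomy z 0 with h | h | h
  · rw [ch_neg h, ch_neg h, ch_neg (by omega), add_zero]
  · subst h; simp [ch]
  · obtain ⟨m, rfl⟩ : ∃ m : ℕ, z = (m : ℤ) + 1 := ⟨(z - 1).toNat, by omega⟩
    have h1 : ((m : ℤ) + 1) = ((m + 1 : ℕ) : ℤ) := by push_cast; ring
    rw [h1]
    have h2 : ((m + 1 : ℕ) : ℤ) - 1 = (m : ℤ) := by push_cast; ring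
    rw [h2, ch_nonneg_eq, ch_nonneg_eq, ch_nonneg_eq, Nat.choose_succ_succ]
    push_cast; ring

/-- Ballot-number closed form for `dyck`. -/
lemma dyck_closed : ∀ k j : ℕ, ∀ m : ℤ, (k : ℤ) - j = 2 * m →
    (dyck k j : ℤ) = ch k m - ch k (m - 1) := by
  intro k
  induction k with
  | zero =>
    intro j m hm
    match j with
    | 0 =>
      have : m = 0 := by omega
      subst this; simp [ch]
    | j + 1 =>
      have hm' : m < 0 := by omega
      rw [ch_neg hm', ch_neg (by omega)]
      simp
  | succ k ih =>
    intro j m hm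
    match j with
    | 0 =>
      -- k + 1 = 2 m, use dyck (k+1) 0 = dyck k 1, k - 1 = 2 (m - 1)
      have hm1 : (k : ℤ) - 1 = 2 * (m - 1) := by omega
      rw [dyck_succ_zero, ih 1 (m - 1) hm1]
      have hk : k = 2 * m.toNat - 1 := by omega
      have hmpos : 1 ≤ m := by omega
      -- need : ch k (m-1) - ch k (m-2) = ch (k+1) m - ch (k+1) (m-1)
      rw [ch_succ, ch_succ]
      have hsymm : ch k m = ch k (m - 1) := by
        -- choose (2t-1) t = choose (2t-1) (t-1)
        obtain ⟨t, rfl⟩ : ∃ t : ℕ, m = (t : ℤ) := ⟨m.toNat, by omega⟩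
        have ht1 : 1 ≤ t := by exact_mod_cast hmpos
        have h2 : ((t : ℤ) - 1) = ((t - 1 : ℕ) : ℤ) := by omega
        rw [ch_nonneg_eq, h2, ch_nonneg_eq]
        have hk' : k = 2 * t - 1 := by omega
        subst hk'
        congr 1
        rw [← Nat.choose_symm (by omega)]
        congr 1
        omega
      rw [hsymm]; ring
    | j + 1 =>
      have h1 : (k : ℤ) - j = 2 * m := by omega
      have h2 : (k : ℤ) - (j + 2) = 2 * (m - 1) := by omega
      rw [dyck_succ_succ]
      push_cast
      rw [ih j m h1, ih (j + 2) (m - 1) h2, ch_succ, ch_succ]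
      ring

lemma dyck_even_zero (n : ℕ) : (dyck (2 * n) 0 : ℤ) = catalan n := by
  have h := dyck_closed (2 * n) 0 n (by push_cast; ring)
  rw [h]
  rcases Nat.eq_zero_or_pos n with rfl | hn
  · simp [ch, catalan_zero]
  · have h1 : ch (2 * n) n = ((2 * n).choose n : ℤ) := ch_nonneg_eq
    have h2 : ((n : ℤ) - 1) = ((n - 1 : ℕ) : ℤ) := by omega
    rw [h1, h2, ch_nonneg_eq]
    -- (n+1) * (choose (2n) n - choose (2n) (n-1)) = centralBinom n = (n+1) * catalan n
    have key : ((n : ℤ) + 1) * ((2 * n).choose n - (2 * n).choose (n - 1)) =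
        ((n : ℤ) + 1) * catalan n := by
      have hc : (2 * n).choose (n - 1 + 1) * (n - 1 + 1) = (2 * n).choose (n - 1) * (2 * n - (n - 1)) :=
        Nat.choose_succ_right_eq (2 * n) (n - 1)
      have hn1 : n - 1 + 1 = n := by omega
      have hn2 : 2 * n - (n - 1) = n + 1 := by omega
      rw [hn1, hn2] at hc
      have hcb : (n + 1) * catalan n = Nat.centralBinom n :=
        succ_mul_catalan_eq_centralBinom n
      have hcb' : Nat.centralBinom n = (2 * n).choose n := rfl
      have hc' : ((2 * n).choose n : ℤ) * n = (2 * n).choose (n - 1) * (n + 1) := by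
        exact_mod_cast hc
      have hcbz : ((n : ℤ) + 1) * catalan n = (2 * n).choose n := by
        rw [← hcb'] at *
        exact_mod_cast congrArg (fun x : ℕ => (x : ℤ)) hcb
      rw [hcbz]
      nlinarith [hc']
    have : ((n : ℤ) + 1) ≠ 0 := by positivity
    exact mul_left_cancel₀ this key

lemma dyck_le_two_pow : ∀ k j : ℕ, dyck k j ≤ 2 ^ k := by
  intro k
  induction k with
  | zero => intro j; match j with | 0 => simp | j + 1 => simp
  | succ k ih =>
    intro j
    match j with
    | 0 => calc dyck (k+1) 0 = dyck k 1 := rfl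
            _ ≤ 2 ^ k := ih 1
            _ ≤ 2 ^ (k+1) := Nat.pow_le_pow_right (by norm_num) (by omega)
    | j + 1 =>
      have := ih j; have := ih (j + 2)
      calc dyck (k+1) (j+1) = dyck k j + dyck k (j+2) := rfl
        _ ≤ 2 ^ k + 2 ^ k := by omega
        _ = 2 ^ (k+1) := by ring

lemma catalan_le_four_pow (n : ℕ) : catalan n ≤ 4 ^ n := by
  have h := dyck_even_zero n
  have h2 := dyck_le_two_pow (2 * n) 0
  have : catalan n ≤ 2 ^ (2 * n) := by
    have : (dyck (2 * n) 0 : ℤ) = catalan n := h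
    omega
  calc catalan n ≤ 2 ^ (2 * n) := this
    _ = 4 ^ n := by rw [pow_mul]; norm_num


/-- coefficient of `e_j` in `C^k e₀`. -/
noncomputable def cf (σ : ℝ) (k j : ℕ) : ℂ := ((σ ^ k * dyck k j : ℝ) : ℂ)

lemma cf_eq_zero_of_lt {σ : ℝ} {k j : ℕ} (h : k < j) : cf σ k j = 0 := by
  simp [cf, dyck_eq_zero_of_lt h]

lemma cf_succ_zero (σ : ℝ) (k : ℕ) : cf σ (k + 1) 0 = (σ : ℂ) * cf σ k 1 := by
  simp only [cf, dyck_succ_zero]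
  push_cast; ring

lemma cf_succ_one (σ : ℝ) (k : ℕ) :
    cf σ (k + 1) 1 = (σ : ℂ) * cf σ k 0 + (σ : ℂ) * cf σ k 2 := by
  simp only [cf, dyck_succ_succ]
  push_cast; ring

lemma cf_succ_succ (σ : ℝ) (k m : ℕ) :
    cf σ (k + 1) (m + 2) = (σ : ℂ) * cf σ k (m + 1) + (σ : ℂ) * cf σ k (m + 3) := by
  simp only [cf, dyck_succ_succ]
  push_cast; ring

lemma single_coord (n m : ℕ) : (lp.single (E := fun _ : ℕ => ℂ) 2 n (1 : ℂ)) m = if m = n then 1 else 0 := by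
  rw [lp.single_apply]
  split_ifs with h
  · subst h; simp
  · simp [Pi.single_apply, h]

lemma sum_if (N : ℕ) (d : ℕ → ℂ) (hd : ∀ j, N ≤ j → d j = 0) (m : ℕ) :
    ∑ j ∈ Finset.range N, d j * (if m = j then (1 : ℂ) else 0) = d m := by
  by_cases h : m < N
  · rw [Finset.sum_eq_single m (fun b _ hb => by simp [(Ne.symm hb : m ≠ b)])
      (fun hm => absurd (Finset.mem_range.2 h) hm)]
    simp
  · rw [hd m (not_lt.1 h), Finset.sum_eq_zero]
    intro b hb
    have hmb : m ≠ b := by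
      rintro rfl; exact h (Finset.mem_range.1 hb)
    simp [hmb]

section Operator

variable (σ : ℝ)
  (C : lp (fun _ : ℕ => ℂ) 2 →L[ℂ] lp (fun _ : ℕ => ℂ) 2)
  (h0 : C (lp.single 2 0 (1 : ℂ)) = (σ : ℂ) • lp.single 2 1 (1 : ℂ))
  (hk : ∀ k : ℕ, C (lp.single 2 (k + 1) (1 : ℂ)) =
      (σ : ℂ) • lp.single 2 k (1 : ℂ) + (σ : ℂ) • lp.single 2 (k + 2) (1 : ℂ))

include h0 hk in
lemma pow_single (k : ℕ) : (C ^ k) (lp.single 2 0 (1 : ℂ)) =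
    ∑ j ∈ Finset.range (k + 3), cf σ k j • lp.single (E := fun _ : ℕ => ℂ) 2 j (1 : ℂ) := by
  induction k with
  | zero =>
    have : ∀ j, 1 ≤ j → cf σ 0 j • lp.single (E := fun _ : ℕ => ℂ) 2 j (1 : ℂ) = 0 := by
      intro j hj
      rcases Nat.exists_eq_add_of_le hj with ⟨j', rfl⟩
      simp [cf, dyck_eq_zero_of_lt (show 0 < 1 + j' by omega)]
    rw [Finset.sum_eq_single 0 (fun b _ hb => this b (Nat.one_le_iff_ne_zero.2 hb))
      (by intro h; exact absurd (Finset.mem_range.2 (by omega)) h)]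
    simp [cf]
  | succ k ih =>
    rw [pow_succ', ContinuousLinearMap.mul_apply, ih, map_sum]
    simp only [_root_.map_smul]
    rw [Finset.sum_range_succ']
    simp only [hk, h0]
    apply lp.ext
    funext m
    simp only [lp.coeFn_sum, lp.coeFn_add, lp.coeFn_smul, Finset.sum_apply, Pi.add_apply,
      Pi.smul_apply, single_coord, smul_eq_mul]
    have expand : ∀ j : ℕ,
        cf σ k (j + 1) * ((σ : ℂ) * (if m = j then 1 else 0) + (σ : ℂ) * (if m = j + 2 then 1 else 0))
        = ((σ : ℂ) * cf σ k (j + 1)) * (if m = j then 1 else 0)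
          + ((σ : ℂ) * cf σ k (j + 1)) * (if m = j + 2 then 1 else 0) := fun j => by ring
    rw [Finset.sum_congr rfl fun j _ => expand j, Finset.sum_add_distrib]
    have hd1 : ∀ j, k + 2 ≤ j → (σ : ℂ) * cf σ k (j + 1) = 0 := fun j hj => by
      rw [cf_eq_zero_of_lt (by omega), mul_zero]
    have hdR : ∀ j, k + 4 ≤ j → cf σ (k + 1) j = 0 := fun j hj =>
      cf_eq_zero_of_lt (by omega)
    rw [sum_if (k + 2) _ hd1 m, sum_if (k + 4) _ hdR m]
    match m with
    | 0 =>
      rw [Finset.sum_eq_zero (fun j _ => by simp)]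
      simp [cf_succ_zero]
    | 1 =>
      rw [Finset.sum_eq_zero (fun j _ => by simp)]
      rw [cf_succ_one]
      simp
      ring
    | m + 2 =>
      have conv2 : ∀ j : ℕ, (if m + 2 = j + 2 then (1:ℂ) else 0) = if m = j then 1 else 0 := by
        intro j; simp
      rw [Finset.sum_congr rfl fun j _ => by rw [conv2 j],
        sum_if (k + 2) _ hd1 m, cf_succ_succ]
      have h3 : m + 2 + 1 = m + 3 := by omega
      rw [h3]
      simp only [Nat.add_eq, if_neg (by omega : ¬ m + 2 = 1), mul_zero, add_zero]
      ring

include h0 hk in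
lemma moment_eq (k : ℕ) :
    (⟪lp.single 2 0 (1 : ℂ), (C ^ k) (lp.single 2 0 (1 : ℂ))⟫).re = σ ^ k * dyck k 0 := by
  rw [pow_single σ C h0 hk k, inner_sum]
  have : ∀ j : ℕ, ⟪lp.single (E := fun _ : ℕ => ℂ) 2 0 (1 : ℂ), cf σ k j • lp.single 2 j (1 : ℂ)⟫
      = cf σ k j * (if (0 : ℕ) = j then 1 else 0) := by
    intro j
    rw [inner_smul_right, lp.inner_single_left]
    simp only [single_coord]
    simp [RCLike.inner_apply]
  rw [Finset.sum_congr rfl fun j _ => this j]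
  rw [sum_if (k + 3) _ (fun j hj => cf_eq_zero_of_lt (by omega)) 0]
  simp only [cf, Complex.ofReal_re]

end Operator

noncomputable def W (n : ℕ) : ℝ := ∫ θ in (0:ℝ)..π, cos θ ^ n

lemma W_zero : W 0 = π := by simp [W]

lemma W_one : W 1 = 0 := by simp [W]

lemma W_rec (n : ℕ) : W (n + 2) = (n + 1) / (n + 2) * W n := by
  unfold W
  rw [integral_cos_pow]
  simp [Real.sin_pi]

lemma W_even (n : ℕ) : W (2 * n) = π * Nat.centralBinom n / 4 ^ n := by
  induction n with
  | zero => simpa [Nat.centralBinom] using W_zero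
  | succ n ih =>
    have h2 : 2 * (n + 1) = 2 * n + 2 := by ring
    rw [h2, W_rec, ih]
    have hc : ((n : ℝ) + 1) * Nat.centralBinom (n + 1) = 2 * (2 * n + 1) * Nat.centralBinom n := by
      exact_mod_cast Nat.succ_mul_centralBinom_succ n
    have h4 : (4 : ℝ) ^ n ≠ 0 := by positivity
    have hn1 : ((n : ℝ) + 1) ≠ 0 := by positivity
    have e1 : (Nat.centralBinom (n + 1) : ℝ) = 2 * (2 * n + 1) * Nat.centralBinom n / (n + 1) := by
      rw [eq_div_iff hn1]
      linear_combination hc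
    rw [e1]
    push_cast
    field_simp
    ring

lemma W_odd (n : ℕ) : W (2 * n + 1) = 0 := by
  induction n with
  | zero => simpa using W_one
  | succ n ih =>
    have h2 : 2 * (n + 1) + 1 = (2 * n + 1) + 2 := by ring
    rw [h2, W_rec, ih, mul_zero]

lemma J_eq (n : ℕ) : (∫ θ in (0:ℝ)..π, cos θ ^ n * sin θ ^ 2) = W n - W (n + 2) := by
  have hptw : ∀ θ : ℝ, cos θ ^ n * sin θ ^ 2 = cos θ ^ n - cos θ ^ (n + 2) := by
    intro θ
    have hs : sin θ ^ 2 = 1 - cos θ ^ 2 := by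
      have := Real.sin_sq_add_cos_sq θ; linarith
    rw [hs, pow_add]; ring
  simp only [hptw]
  rw [intervalIntegral.integral_sub]
  · rfl
  · exact (continuous_cos.pow n).intervalIntegrable 0 π
  · exact (continuous_cos.pow (n + 2)).intervalIntegrable 0 π

lemma J_even (n : ℕ) :
    (∫ θ in (0:ℝ)..π, cos θ ^ (2 * n) * sin θ ^ 2) = π * catalan n / (2 * 4 ^ n) := by
  rw [J_eq]
  have h2 : 2 * n + 2 = 2 * (n + 1) := by ring
  rw [h2, W_even, W_even]
  have hc : ((n : ℝ) + 1) * Nat.centralBinom (n + 1) = 2 * (2 * n + 1) * Nat.centralBinom n := by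
    exact_mod_cast Nat.succ_mul_centralBinom_succ n
  have hcat : ((n : ℝ) + 1) * catalan n = Nat.centralBinom n := by
    exact_mod_cast succ_mul_catalan_eq_centralBinom n
  have h4 : (4 : ℝ) ^ n ≠ 0 := by positivity
  have hn1 : ((n : ℝ) + 1) ≠ 0 := by positivity
  have e1 : (Nat.centralBinom (n + 1) : ℝ) = 2 * (2 * n + 1) * Nat.centralBinom n / (n + 1) := by
    rw [eq_div_iff hn1]
    linear_combination hc
  have e2 : (Nat.centralBinom n : ℝ) = (n + 1) * catalan n := hcat.symm
  rw [e1, e2]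
  push_cast
  field_simp
  ring

lemma J_odd (n : ℕ) :
    (∫ θ in (0:ℝ)..π, cos θ ^ (2 * n + 1) * sin θ ^ 2) = 0 := by
  rw [J_eq]
  have h2 : 2 * n + 1 + 2 = 2 * (n + 1) + 1 := by ring
  rw [h2, W_odd, W_odd, sub_zero]

lemma subst_lemma (σ : ℝ) (hσ : 0 < σ) (k : ℕ) :
    (∫ x in (-(2 * σ))..(2 * σ), x ^ k * Real.sqrt (4 * σ ^ 2 - x ^ 2)) =
      (2 * σ) ^ (k + 2) * ∫ θ in (0:ℝ)..π, cos θ ^ k * sin θ ^ 2 := by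
  have hg : Continuous fun x : ℝ => x ^ k * Real.sqrt (4 * σ ^ 2 - x ^ 2) := by
    apply Continuous.mul (continuous_pow k)
    exact Real.continuous_sqrt.comp (by fun_prop)
  have hderiv : ∀ θ ∈ Set.uIcc (0:ℝ) π, HasDerivAt (fun θ => 2 * σ * cos θ)
      (-(2 * σ) * sin θ) θ := by
    intro θ _
    simpa [mul_comm, mul_assoc, mul_left_comm] using ((Real.hasDerivAt_cos θ).const_mul (2 * σ))
  have h := intervalIntegral.integral_comp_smul_deriv hderiv
    (by fun_prop : Continuous fun θ : ℝ => -(2 * σ) * sin θ).continuousOn hg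
  have hcos0 : 2 * σ * cos 0 = 2 * σ := by simp
  have hcosπ : 2 * σ * cos π = -(2 * σ) := by simp
  rw [hcos0, hcosπ] at h
  have hLHS : (∫ θ in (0:ℝ)..π, (-(2 * σ) * sin θ) •
      ((fun x => x ^ k * Real.sqrt (4 * σ ^ 2 - x ^ 2)) ∘ fun θ => 2 * σ * cos θ) θ) =
      -((2 * σ) ^ (k + 2) * ∫ θ in (0:ℝ)..π, cos θ ^ k * sin θ ^ 2) := by
    rw [← intervalIntegral.integral_const_mul, ← intervalIntegral.integral_neg]
    apply intervalIntegral.integral_congr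
    intro θ hθ
    rw [Set.uIcc_of_le Real.pi_pos.le] at hθ
    have hsin : 0 ≤ sin θ := Real.sin_nonneg_of_nonneg_of_le_pi hθ.1 hθ.2
    have hsqrt : Real.sqrt (4 * σ ^ 2 - (2 * σ * cos θ) ^ 2) = 2 * σ * sin θ := by
      have : 4 * σ ^ 2 - (2 * σ * cos θ) ^ 2 = (2 * σ * sin θ) ^ 2 := by
        have := Real.sin_sq_add_cos_sq θ
        nlinarith [this]
      rw [this, Real.sqrt_sq (by positivity)]
    simp only [Function.comp_apply, smul_eq_mul, hsqrt]
    ring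
  rw [hLHS] at h
  have hsymm : (∫ x in (2 * σ)..(-(2 * σ)), x ^ k * Real.sqrt (4 * σ ^ 2 - x ^ 2)) =
      -∫ x in (-(2 * σ))..(2 * σ), x ^ k * Real.sqrt (4 * σ ^ 2 - x ^ 2) :=
    intervalIntegral.integral_symm _ _
  rw [hsymm] at h
  linarith [h]


section Density

variable (σ : ℝ)

/-- The semicircle density. -/
noncomputable def ρ (x : ℝ) : ℝ := (2 * π * σ ^ 2)⁻¹ * Real.sqrt (4 * σ ^ 2 - x ^ 2)

lemma ρ_cont : Continuous (ρ σ) :=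
  continuous_const.mul (Real.continuous_sqrt.comp (by fun_prop))

lemma ρ_nonneg (x : ℝ) (hσ : 0 < σ) : 0 ≤ ρ σ x := by
  unfold ρ
  have : (0:ℝ) ≤ (2 * π * σ ^ 2)⁻¹ := by positivity
  exact mul_nonneg this (Real.sqrt_nonneg _)

lemma ρ_vanish (hσ : 0 < σ) {x : ℝ} (hx : x ∉ Set.Ioo (-(2 * σ)) (2 * σ)) : ρ σ x = 0 := by
  unfold ρ
  have h : 4 * σ ^ 2 - x ^ 2 ≤ 0 := by
    simp only [Set.mem_Ioo, not_and_or, not_lt] at hx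
    rcases hx with h | h
    · have h2 : 2 * σ ≤ -x := by linarith
      nlinarith [mul_le_mul h2 h2 (by linarith : (0:ℝ) ≤ 2 * σ) (by linarith : (0:ℝ) ≤ -x)]
    · have h2 : 2 * σ ≤ x := h
      nlinarith [mul_le_mul h2 h2 (by linarith : (0:ℝ) ≤ 2 * σ) (by linarith : (0:ℝ) ≤ x)]
  rw [Real.sqrt_eq_zero'.mpr h, mul_zero]

lemma ρ_mul_support (hσ : 0 < σ) (k : ℕ) :
    Function.support (fun x => ρ σ x * x ^ k) ⊆ Set.Ioc (-(2 * σ)) (2 * σ) := by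
  intro x hx
  by_contra hmem
  apply hx
  have : ρ σ x = 0 := ρ_vanish σ hσ (fun h => hmem ⟨h.1, h.2.le⟩)
  simp [this]

lemma ρ_mul_integrable (hσ : 0 < σ) (k : ℕ) :
    Integrable (fun x => ρ σ x * x ^ k) := by
  apply Continuous.integrable_of_hasCompactSupport ((ρ_cont σ).mul (continuous_pow k))
  apply HasCompactSupport.intro (isCompact_Icc (a := -(2 * σ)) (b := 2 * σ))
  intro x hx
  have : ρ σ x = 0 := ρ_vanish σ hσ (fun h => hx ⟨h.1.le, h.2.le⟩)
  simp [this]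

lemma ρ_moment (hσ : 0 < σ) (k : ℕ) :
    (∫ x : ℝ, ρ σ x * x ^ k) = σ ^ k * dyck k 0 := by
  rw [← intervalIntegral.integral_eq_integral_of_support_subset (ρ_mul_support σ hσ k)]
  have : (∫ x in (-(2 * σ))..(2 * σ), ρ σ x * x ^ k) =
      (2 * π * σ ^ 2)⁻¹ * ∫ x in (-(2 * σ))..(2 * σ), x ^ k * Real.sqrt (4 * σ ^ 2 - x ^ 2) := by
    rw [← intervalIntegral.integral_const_mul]
    apply intervalIntegral.integral_congr
    intro x _
    unfold ρ; ring
  rw [this, subst_lemma σ hσ k]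
  have hπ : π ≠ 0 := Real.pi_ne_zero
  have hσ' : σ ≠ 0 := ne_of_gt hσ
  rcases Nat.even_or_odd k with ⟨n, hn⟩ | ⟨n, hn⟩
  · subst hn
    have h2n : n + n = 2 * n := by ring
    rw [h2n, J_even]
    have hd : (dyck (2 * n) 0 : ℝ) = catalan n := by
      exact_mod_cast dyck_even_zero n
    rw [hd]
    have h4 : (4:ℝ) ^ n ≠ 0 := by positivity
    field_simp
    rw [mul_pow, show ((2:ℝ)) ^ (2 * n + 2) = 4 * 4 ^ n by rw [pow_add, pow_mul]; norm_num; ring]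
    ring
  · subst hn
    have h2n : 2 * n + 1 = 2 * n + 1 := rfl
    rw [J_odd]
    have hd : (dyck (2 * n + 1) 0 : ℝ) = 0 := by
      exact_mod_cast congrArg (Nat.cast : ℕ → ℝ) (dyck_eq_zero_of_odd (2 * n + 1) 0 (by omega))
    rw [hd]
    ring

end Density

section Nu

variable (σ : ℝ)

/-- The semicircle measure. -/
noncomputable def ν : Measure ℝ := volume.withDensity fun x => ENNReal.ofReal (ρ σ x)

lemma ρ_toNNReal_meas : Measurable fun x => (ρ σ x).toNNReal :=
  (continuous_real_toNNReal.comp (ρ_cont σ)).measurable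

lemma ν_integral (hσ : 0 < σ) (g : ℝ → ℝ) :
    (∫ x, g x ∂(ν σ)) = ∫ x, ρ σ x * g x := by
  have hid : ν σ = volume.withDensity fun x => (((fun x => (ρ σ x).toNNReal) x : ℝ≥0) : ℝ≥0∞) :=
    rfl
  rw [hid, integral_withDensity_eq_integral_smul (ρ_toNNReal_meas σ) g]
  congr 1
  funext x
  rw [NNReal.smul_def, Real.coe_toNNReal _ (ρ_nonneg σ x hσ), smul_eq_mul]

lemma ν_moment (hσ : 0 < σ) (k : ℕ) : (∫ x, x ^ k ∂(ν σ)) = σ ^ k * dyck k 0 := by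
  rw [ν_integral σ hσ, ρ_moment σ hσ]

lemma ν_integrable_pow (hσ : 0 < σ) (k : ℕ) : Integrable (fun x => x ^ k) (ν σ) := by
  have hid : ν σ = volume.withDensity fun x => (((fun x => (ρ σ x).toNNReal) x : ℝ≥0) : ℝ≥0∞) :=
    rfl
  rw [hid, integrable_withDensity_iff_integrable_smul (ρ_toNNReal_meas σ)]
  have : (fun x => ((ρ σ x).toNNReal : ℝ≥0) • x ^ k) = fun x => ρ σ x * x ^ k := by
    funext x
    rw [NNReal.smul_def, Real.coe_toNNReal _ (ρ_nonneg σ x hσ), smul_eq_mul]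
  rw [this]
  exact ρ_mul_integrable σ hσ k

lemma ν_prob (hσ : 0 < σ) : IsProbabilityMeasure (ν σ) := by
  constructor
  rw [ν, withDensity_apply _ MeasurableSet.univ, Measure.restrict_univ]
  have hInt : Integrable (ρ σ) := by simpa using ρ_mul_integrable σ hσ 0
  have hnn : 0 ≤ᵐ[volume] ρ σ := Eventually.of_forall fun x => ρ_nonneg σ x hσ
  rw [← ofReal_integral_eq_lintegral_ofReal hInt hnn]
  have : (∫ x : ℝ, ρ σ x) = 1 := by
    have := ρ_moment σ hσ 0
    simpa [dyck_zero_zero] using this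
  rw [this, ENNReal.ofReal_one]

lemma ν_compl (hσ : 0 < σ) : ν σ (Set.Icc (-(2 * σ)) (2 * σ))ᶜ = 0 := by
  rw [ν, withDensity_apply _ measurableSet_Icc.compl]
  have h0 : ∀ᵐ (x : ℝ) ∂volume, x ∈ (Set.Icc (-(2 * σ)) (2 * σ))ᶜ →
      ENNReal.ofReal (ρ σ x) = (0 : ℝ≥0∞) :=
    Eventually.of_forall fun x hx => by
      rw [ρ_vanish σ hσ (fun h => hx ⟨h.1.le, h.2.le⟩), ENNReal.ofReal_zero]
  rw [setLIntegral_congr_fun_ae measurableSet_Icc.compl h0, lintegral_zero]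

end Nu

/-- Markov-type tail bound: a probability measure whose even moments are bounded by `R^(2k)`
gives zero mass to `{x | R < |x|}`. -/
lemma tail_zero (μ : Measure ℝ) [IsProbabilityMeasure μ] (R : ℝ) (hR : 0 < R)
    (hint : ∀ k : ℕ, Integrable (fun x => x ^ k) μ)
    (hbd : ∀ n : ℕ, (∫ x, x ^ (2 * n) ∂μ) ≤ R ^ (2 * n)) :
    μ (Set.Icc (-R) R)ᶜ = 0 := by
  have key : ∀ r : ℝ, R < r → μ {x : ℝ | r ≤ |x|} = 0 := by
    intro r hr
    have hr0 : 0 < r := hR.trans hr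
    set A : Set ℝ := {x : ℝ | r ≤ |x|}
    have hA : ∀ n : ℕ, (μ A).toReal ≤ ((R / r) ^ 2) ^ n := by
      intro n
      have hsub : A ⊆ {x : ℝ | r ^ (2 * n) ≤ x ^ (2 * n)} := by
        intro x hx
        have h1 : r ^ (2 * n) ≤ |x| ^ (2 * n) := pow_le_pow_left₀ hr0.le hx (2 * n)
        have h2 : |x| ^ (2 * n) = x ^ (2 * n) := (even_two_mul n).pow_abs x
        simpa [h2] using h1
      have hmarkov := mul_meas_ge_le_integral_of_nonneg
        (μ := μ) (f := fun x => x ^ (2 * n))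
        (Eventually.of_forall fun x => (even_two_mul n).pow_nonneg x)
        (hint (2 * n)) (r ^ (2 * n))
      have hle : (μ A).toReal ≤ (μ {x : ℝ | r ^ (2 * n) ≤ x ^ (2 * n)}).toReal := by
        apply ENNReal.toReal_mono (measure_ne_top μ _)
        exact measure_mono hsub
      have hrpow : 0 < r ^ (2 * n) := pow_pos hr0 _
      have : r ^ (2 * n) * (μ A).toReal ≤ R ^ (2 * n) := by
        calc r ^ (2 * n) * (μ A).toReal
            ≤ r ^ (2 * n) * (μ {x : ℝ | r ^ (2 * n) ≤ x ^ (2 * n)}).toReal := by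
              exact mul_le_mul_of_nonneg_left hle hrpow.le
          _ ≤ ∫ x, x ^ (2 * n) ∂μ := hmarkov
          _ ≤ R ^ (2 * n) := hbd n
      calc (μ A).toReal = r ^ (2 * n) * (μ A).toReal / r ^ (2 * n) := by
            field_simp
        _ ≤ R ^ (2 * n) / r ^ (2 * n) := by
            gcongr
        _ = ((R / r) ^ 2) ^ n := by
            simp [div_pow, pow_mul]
    have hq : (R / r) ^ 2 < 1 := by
      have h1 : R / r < 1 := (div_lt_one hr0).mpr hr
      have h0 : 0 ≤ R / r := by positivity
      nlinarith
    have hq0 : 0 ≤ (R / r) ^ 2 := sq_nonneg _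
    have htend : Tendsto (fun n : ℕ => ((R / r) ^ 2) ^ n) atTop (𝓝 0) :=
      tendsto_pow_atTop_nhds_zero_of_lt_one hq0 hq
    have hle0 : (μ A).toReal ≤ 0 := ge_of_tendsto' htend hA
    have : (μ A).toReal = 0 := le_antisymm hle0 ENNReal.toReal_nonneg
    exact (ENNReal.toReal_eq_zero_iff _).mp this |>.resolve_right (measure_ne_top μ A)
  have hsub : (Set.Icc (-R) R)ᶜ ⊆ ⋃ n : ℕ, {x : ℝ | R + 1 / (n + 1) ≤ |x|} := by
    intro x hx
    simp only [Set.mem_compl_iff, Set.mem_Icc, not_and_or, not_le] at hx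
    have habs : R < |x| := by
      rcases hx with h | h
      · rw [abs_of_neg (by linarith)]; linarith
      · calc R < x := h
          _ ≤ |x| := le_abs_self x
    obtain ⟨n, hn⟩ := exists_nat_one_div_lt (show (0:ℝ) < |x| - R by linarith)
    exact Set.mem_iUnion.mpr ⟨n, by simp only [Set.mem_setOf_eq]; push_cast; linarith⟩
  apply measure_mono_null hsub
  apply measure_iUnion_null
  intro n
  apply key
  have : (0:ℝ) < 1 / (n + 1) := by positivity
  linarith


lemma integral_poly (m : Measure ℝ) (hI : ∀ k : ℕ, Integrable (fun x => x ^ k) m)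
    (p : Polynomial ℝ) :
    ∫ x, p.eval x ∂m
      = ∑ i ∈ Finset.range (p.natDegree + 1), p.coeff i * ∫ x, x ^ i ∂m := by
  have hev : ∀ x : ℝ, p.eval x = ∑ i ∈ Finset.range (p.natDegree + 1), p.coeff i * x ^ i :=
    fun x => Polynomial.eval_eq_sum_range (p := p) x
  simp only [hev]
  rw [integral_finset_sum _ fun i _ => (hI i).const_mul _]
  exact Finset.sum_congr rfl fun i _ => by
    simpa [smul_eq_mul] using MeasureTheory.integral_smul (μ := m) (p.coeff i) fun x : ℝ => x ^ i

lemma integrable_poly (m : Measure ℝ) (hI : ∀ k : ℕ, Integrable (fun x => x ^ k) m)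
    (p : Polynomial ℝ) : Integrable (fun x => p.eval x) m := by
  have hev : ∀ x : ℝ, p.eval x = ∑ i ∈ Finset.range (p.natDegree + 1), p.coeff i * x ^ i :=
    fun x => Polynomial.eval_eq_sum_range (p := p) x
  simp only [hev]
  exact integrable_finset_sum _ fun i _ => (hI i).const_mul _

lemma integral_eq_of_moments_eq (μ ν : Measure ℝ) [IsProbabilityMeasure μ]
    [IsProbabilityMeasure ν] (R : ℝ) (hR : 0 < R)
    (hμc : μ (Set.Icc (-R) R)ᶜ = 0) (hνc : ν (Set.Icc (-R) R)ᶜ = 0)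
    (hμI : ∀ k : ℕ, Integrable (fun x => x ^ k) μ)
    (hνI : ∀ k : ℕ, Integrable (fun x => x ^ k) ν)
    (hm : ∀ k : ℕ, (∫ x, x ^ k ∂μ) = ∫ x, x ^ k ∂ν)
    (F : ℝ → ℝ) (hF : Continuous F)
    (hFμ : Integrable F μ) (hFν : Integrable F ν) :
    (∫ x, F x ∂μ) = ∫ x, F x ∂ν := by
  set K : Set ℝ := Set.Icc (-R) R with hK
  have hμr : μ.restrict K = μ :=
    Measure.restrict_eq_self_of_ae_mem (ae_iff.mpr hμc)
  have hνr : ν.restrict K = ν :=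
    Measure.restrict_eq_self_of_ae_mem (ae_iff.mpr hνc)
  have key : ∀ ε : ℝ, 0 < ε → |(∫ x, F x ∂μ) - ∫ x, F x ∂ν| ≤ 2 * ε := by
    intro ε hε
    set Fc : C(K, ℝ) := (ContinuousMap.mk F hF).restrict K with hFc
    have hmem : Fc ∈ closure ((polynomialFunctions K : Subalgebra ℝ C(K, ℝ)) : Set C(K, ℝ)) :=
      continuousMap_mem_polynomialFunctions_closure (-R) R Fc
    rw [Metric.mem_closure_iff] at hmem
    obtain ⟨g, hg, hdist⟩ := hmem ε hε
    rw [polynomialFunctions_coe] at hg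
    obtain ⟨p, hp⟩ := hg
    have hbound : ∀ x ∈ K, |F x - p.eval x| ≤ ε := by
      intro x hx
      have h1 : dist (Fc ⟨x, hx⟩) (g ⟨x, hx⟩) ≤ dist Fc g :=
        ContinuousMap.dist_apply_le_dist _
      have h2 : g ⟨x, hx⟩ = p.eval x := by
        rw [← hp]
        simp [Polynomial.toContinuousMapOnAlgHom_apply, Polynomial.toContinuousMapOn,
          Polynomial.toContinuousMap]
      have h3 : Fc ⟨x, hx⟩ = F x := rfl
      rw [h2, h3, Real.dist_eq] at h1
      exact h1.trans hdist.le
    have est : ∀ (m : Measure ℝ), IsProbabilityMeasure m → m.restrict K = m → Integrable F m →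
        |(∫ x, F x ∂m) - ∫ x, p.eval x ∂m| ≤ ε := by
      intro m hprob hmr hFm
      haveI := hprob
      have hpm : Integrable (fun x => p.eval x) m := by
        rw [← hmr]
        exact (p.continuous_aeval.continuousOn).integrableOn_compact isCompact_Icc
      rw [← integral_sub hFm hpm]
      have hae : ∀ᵐ x ∂(m.restrict K), ‖F x - p.eval x‖ ≤ ε := by
        rw [hK, ae_restrict_iff' measurableSet_Icc]
        exact Eventually.of_forall fun x hx => by
          rw [Real.norm_eq_abs]; exact hbound x hx
      have hfin : IsFiniteMeasure (m.restrict K) := by rw [hmr]; infer_instance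
      calc |∫ x, F x - p.eval x ∂m|
          = ‖∫ x, F x - p.eval x ∂(m.restrict K)‖ := by rw [hmr, Real.norm_eq_abs]
        _ ≤ ε * ((m.restrict K) Set.univ).toReal := norm_integral_le_of_norm_le_const hae
        _ = ε := by rw [hmr, measure_univ, ENNReal.toReal_one, mul_one]
    have hpμν : (∫ x, p.eval x ∂μ) = ∫ x, p.eval x ∂ν := by
      rw [integral_poly μ hμI p, integral_poly ν hνI p]
      exact Finset.sum_congr rfl fun i _ => by rw [hm i]
    have h1 := est μ ‹_› hμr hFμ
    have h2 := est ν ‹_› hνr hFν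
    calc |(∫ x, F x ∂μ) - ∫ x, F x ∂ν|
        ≤ |(∫ x, F x ∂μ) - ∫ x, p.eval x ∂μ|
          + |(∫ x, p.eval x ∂μ) - ∫ x, F x ∂ν| := abs_sub_le _ _ _
      _ = |(∫ x, F x ∂μ) - ∫ x, p.eval x ∂μ|
          + |(∫ x, F x ∂ν) - ∫ x, p.eval x ∂ν| := by
            rw [hpμν, abs_sub_comm (∫ x, p.eval x ∂ν) (∫ x, F x ∂ν)]
      _ ≤ ε + ε := add_le_add h1 h2
      _ = 2 * ε := by ring
  by_contra hne
  have habs : 0 < |(∫ x, F x ∂μ) - ∫ x, F x ∂ν| := abs_pos.mpr (sub_ne_zero.mpr hne)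
  have := key (|(∫ x, F x ∂μ) - ∫ x, F x ∂ν| / 4) (by positivity)
  linarith


end SemicircleAux

open SemicircleAux in
/-- The spectral measure at the root vector `e₀` of the adjacency operator of `ℕ` (rooted at its
first vertex) with all edge weights `σ > 0`, i.e. `C e_k = σ e_{k-1} + σ e_{k+1}`, is the
semicircle law of variance `σ²`, with density `(2πσ²)⁻¹ √(4σ² - x²)` on `[-2σ, 2σ]`.
The spectral measure `μ` at `e₀` is recorded through its defining moments
`∫ x^k dμ = ⟨e₀, C^k e₀⟩`. -/
theorem spectral_measure_of_half_line_is_semicircle (σ : ℝ) (hσ : 0 < σ)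
    (C : lp (fun _ : ℕ => ℂ) 2 →L[ℂ] lp (fun _ : ℕ => ℂ) 2) (hsa : IsSelfAdjoint C)
    (h0 : C (lp.single 2 0 (1 : ℂ)) = (σ : ℂ) • lp.single 2 1 (1 : ℂ))
    (hk : ∀ k : ℕ, C (lp.single 2 (k + 1) (1 : ℂ)) =
      (σ : ℂ) • lp.single 2 k (1 : ℂ) + (σ : ℂ) • lp.single 2 (k + 2) (1 : ℂ))
    (μ : Measure ℝ) [IsProbabilityMeasure μ]
    (hint : ∀ k : ℕ, Integrable (fun x => x ^ k) μ)
    (hmom : ∀ k : ℕ, ∫ x, x ^ k ∂μ =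
      (⟪lp.single 2 0 (1 : ℂ), (C ^ k) (lp.single 2 0 (1 : ℂ))⟫).re) :
    μ = volume.withDensity fun x =>
      ENNReal.ofReal ((2 * Real.pi * σ ^ 2)⁻¹ * Real.sqrt (4 * σ ^ 2 - x ^ 2)) := by
  classical
  have hμmom : ∀ k : ℕ, (∫ x, x ^ k ∂μ) = σ ^ k * dyck k 0 := fun k => by
    rw [hmom k, moment_eq σ C h0 hk k]
  haveI hνp : IsProbabilityMeasure (ν σ) := ν_prob σ hσ
  have hνdef : volume.withDensity (fun x =>
      ENNReal.ofReal ((2 * Real.pi * σ ^ 2)⁻¹ * Real.sqrt (4 * σ ^ 2 - x ^ 2))) = ν σ := rfl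
  rw [hνdef]
  apply ext_of_forall_lintegral_eq_of_IsFiniteMeasure
  intro f
  have hFc : Continuous fun x => (f x : ℝ) := NNReal.continuous_coe.comp f.continuous
  have hFμ : Integrable (fun x => (f x : ℝ)) μ := f.integrable_of_nnreal μ
  have hFν : Integrable (fun x => (f x : ℝ)) (ν σ) := f.integrable_of_nnreal _
  have hmeq : ∀ k : ℕ, (∫ x, x ^ k ∂μ) = ∫ x, x ^ k ∂(ν σ) := fun k => by
    rw [hμmom k, ν_moment σ hσ k]
  have hμb : ∀ n : ℕ, (∫ x, x ^ (2 * n) ∂μ) ≤ (2 * σ) ^ (2 * n) := by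
    intro n
    rw [hμmom (2 * n)]
    have hd : (dyck (2 * n) 0 : ℝ) = catalan n := by exact_mod_cast dyck_even_zero n
    rw [hd]
    have h1 : (catalan n : ℝ) ≤ 4 ^ n := by exact_mod_cast catalan_le_four_pow n
    calc σ ^ (2 * n) * catalan n ≤ σ ^ (2 * n) * 4 ^ n := by
          apply mul_le_mul_of_nonneg_left h1 (by positivity)
      _ = (2 * σ) ^ (2 * n) := by
          rw [mul_pow, show ((2:ℝ)) ^ (2 * n) = 4 ^ n by rw [pow_mul]; norm_num]
          ring
  have hμc := tail_zero μ (2 * σ) (by positivity) hint hμb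
  have hνc := ν_compl σ hσ
  have hIeq := integral_eq_of_moments_eq μ (ν σ) (2 * σ) (by positivity) hμc hνc hint
    (ν_integrable_pow σ hσ) hmeq (fun x => (f x : ℝ)) hFc hFμ hFν
  rw [lintegral_coe_eq_integral (fun x => f x) hFμ,
    lintegral_coe_eq_integral (fun x => f x) hFν, hIeq]
end
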